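/- arXiv:2309.05612 — 10 statements merged into one kernel-verified Lean document; each statement's English description precedes it below -/
import Mathlib

section
/- Let n, m, t be integers with 1 ≤ m ≤ n and 0 ≤ t ≤ m−1. Then the flag-shaped set B_n(m,t) is a blocker of all n×n 123-avoiding permutation matrices; that is, for every 123-avoiding permutation σ of {1,…,n} there exists an index i with (i, σ(i)) ∈ B_n(m,t). -/
/-- A permutation of `Fin n` is `123`-avoiding if it has no increasing
subsequence of length 3. -/
def Avoids123 {n : ℕ} (σ : Equiv.Perm (Fin n)) : Prop :=
  ∀ i j k : Fin n, i < j → j < k → σ i < σ j → ¬ σ j < σ k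

/-- A set of positions is a blocker of all `n × n` `123`-avoiding permutation
matrices if every `123`-avoiding permutation meets it. -/
def IsBlocker {n : ℕ} (B : Set (Fin n × Fin n)) : Prop :=
  ∀ σ : Equiv.Perm (Fin n), Avoids123 σ → ∃ i : Fin n, (i, σ i) ∈ B

/-- The flag-shaped blocker `B_n(m,t)` (with `1`-based row/column indices
`i+1`, `j+1` for `(i,j) : Fin n × Fin n`): the "pole"
`{(i,m) : 1 ≤ i ≤ n-t}` together with the "flag"
`{(i,j) : 1 ≤ i ≤ n-m+1, m-t ≤ j ≤ m-1}`. -/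
def FlagBlocker (n m t : ℕ) : Set (Fin n × Fin n) :=
  {p | ((p.2 : ℕ) + 1 = m ∧ (p.1 : ℕ) + 1 + t ≤ n) ∨
       ((p.1 : ℕ) + m ≤ n ∧ m ≤ (p.2 : ℕ) + 1 + t ∧ (p.2 : ℕ) + 2 ≤ m)}

/-- The permutation matrix of `σ`: the real `(0,1)`-matrix with a `1` in
position `(i, j)` exactly when `j = σ i`. -/
def permMatrix (n : ℕ) (σ : Equiv.Perm (Fin n)) : Matrix (Fin n) (Fin n) ℝ :=
  fun i j => if σ i = j then 1 else 0

/-- for `1 ≤ m ≤ n` and `0 ≤ t ≤ m-1`, the flag-shaped set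
`B_n(m,t)` is a blocker of all `n × n` `123`-avoiding permutation matrices. -/
theorem flagBlocker_isBlocker (n m t : ℕ) (hm1 : 1 ≤ m) (hmn : m ≤ n)
    (ht : t + 1 ≤ m) :
    IsBlocker (FlagBlocker n m t) := by
  intro σ hσ
  have hc : m - 1 < n := by omega
  set c : Fin n := ⟨m - 1, hc⟩ with hcdef
  set r : Fin n := σ.symm c with hrdef
  have hσr : σ r = c := σ.apply_symm_apply c
  by_cases hr : (r : ℕ) + 1 + t ≤ n
  · refine ⟨r, Or.inl ⟨?_, hr⟩⟩
    rw [hσr]; simp only [hcdef]; omega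
  · push_neg at hr
    set S : Finset (Fin n) :=
      Finset.univ.filter (fun i => i < r ∧ (σ i : ℕ) + 2 ≤ m) with hSdef
    have hmemS : ∀ i : Fin n, i ∈ S ↔ (i < r ∧ (σ i : ℕ) + 2 ≤ m) := by
      intro i; simp [hSdef]
    have hT : ((Finset.Iio c).image σ.symm).card = m - 1 := by
      rw [Finset.card_image_of_injective _ σ.symm.injective, Fin.card_Iio]
    have hTsub : (Finset.Iio c).image σ.symm ⊆ S ∪ Finset.Ioi r := by
      intro i hi
      rw [Finset.mem_image] at hi
      obtain ⟨j, hj, hji⟩ := hi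
      rw [Finset.mem_Iio] at hj
      have hσi : σ i = j := by rw [← hji, σ.apply_symm_apply]
      have hjv : (j : ℕ) < m - 1 := hj
      rcases lt_trichotomy i r with h | h | h
      · exact Finset.mem_union_left _
          ((hmemS i).2 ⟨h, by rw [hσi]; omega⟩)
      · exfalso
        rw [h, hσr] at hσi
        rw [← hσi] at hjv
        simp only [hcdef] at hjv
        omega
      · exact Finset.mem_union_right _ (Finset.mem_Ioi.2 h)
    have hScard : m - t ≤ S.card := by
      have h1 := Finset.card_le_card hTsub
      have h2 := Finset.card_union_le S (Finset.Ioi r)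
      have h3 : (Finset.Ioi r).card = n - 1 - (r : ℕ) := Fin.card_Ioi r
      have hrn : (r : ℕ) < n := r.isLt
      omega
    have hSne : S.Nonempty := Finset.card_pos.1 (by omega)
    set i0 : Fin n := S.min' hSne with hi0def
    have hi0S : i0 ∈ S := S.min'_mem hSne
    have hi0r : i0 < r := ((hmemS i0).1 hi0S).1
    have hi0v : (σ i0 : ℕ) + 2 ≤ m := ((hmemS i0).1 hi0S).2
    -- every element of S has value ≤ σ i0
    have hmax : ∀ i ∈ S, (σ i : ℕ) ≤ (σ i0 : ℕ) := by
      intro i hi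
      by_contra hlt
      push_neg at hlt
      have hii : i0 < i := by
        rcases lt_or_eq_of_le (S.min'_le i hi) with h | h
        · exact h
        · rw [← h, ← hi0def] at hlt; omega
      have hir : i < r := ((hmemS i).1 hi).1
      have hsv : (σ i : ℕ) + 2 ≤ m := ((hmemS i).1 hi).2
      refine hσ i0 i r hii hir (Fin.lt_def.2 hlt) (Fin.lt_def.2 ?_)
      rw [hσr]
      show (σ i : ℕ) < m - 1
      omega
    -- σ i0 ≥ m - t - 1
    have hval : m - t ≤ (σ i0 : ℕ) + 1 := by
      have hinj : Set.InjOn (fun i => (σ i : ℕ)) S := by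
        intro a _ b _ hab
        exact σ.injective (Fin.val_injective hab)
      have hcard : (S.image (fun i => (σ i : ℕ))).card = S.card :=
        Finset.card_image_of_injOn hinj
      have hsub : S.image (fun i => (σ i : ℕ)) ⊆ Finset.range ((σ i0 : ℕ) + 1) := by
        intro v hv
        rw [Finset.mem_image] at hv
        obtain ⟨i, hi, rfl⟩ := hv
        exact Finset.mem_range.2 (Nat.lt_succ_of_le (hmax i hi))
      have h4 := Finset.card_le_card hsub
      rw [hcard, Finset.card_range] at h4
      omega
    -- rows before i0 map to columns ≥ m
    have hbig : ∀ i : Fin n, i < i0 → m ≤ (σ i : ℕ) := by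
      intro i hii
      have hir : i < r := hii.trans hi0r
      have hns : i ∉ S := fun h => absurd (S.min'_le i h) (not_le.2 hii)
      have h5 : ¬ ((σ i : ℕ) + 2 ≤ m) := by
        intro h6; exact hns ((hmemS i).2 ⟨hir, h6⟩)
      have h7 : σ i ≠ c := by
        intro h8
        have : i = r := σ.injective (h8.trans hσr.symm)
        rw [this] at hir; exact lt_irrefl r hir
      have h9 : (σ i : ℕ) ≠ m - 1 := by
        intro h10
        exact h7 (Fin.val_injective (by simp only [hcdef]; exact h10))
      omega
    have hrow : (i0 : ℕ) + m ≤ n := by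
      have hinj : Set.InjOn (fun i => (σ i : ℕ)) (Finset.Iio i0) := by
        intro a _ b _ hab
        exact σ.injective (Fin.val_injective hab)
      have hcard : ((Finset.Iio i0).image (fun i => (σ i : ℕ))).card = (i0 : ℕ) := by
        rw [Finset.card_image_of_injOn hinj, Fin.card_Iio]
      have hsub : (Finset.Iio i0).image (fun i => (σ i : ℕ)) ⊆ Finset.Ico m n := by
        intro v hv
        rw [Finset.mem_image] at hv
        obtain ⟨i, hi, rfl⟩ := hv
        exact Finset.mem_Ico.2 ⟨hbig i (Finset.mem_Iio.1 hi), (σ i).isLt⟩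
      have h11 := Finset.card_le_card hsub
      rw [hcard, Nat.card_Ico] at h11
      omega
    exact ⟨i0, Or.inr ⟨hrow, by show m ≤ (σ i0 : ℕ) + 1 + t; omega, hi0v⟩⟩
end

section
/- Let n, m, t be integers with 1 ≤ m ≤ n and 0 ≤ t ≤ m−1, and let B_n(m,t) be the flag-shaped blocker. For every column index j with m−t ≤ j ≤ m (i.e., for every position (1, j) of B_n(m,t) lying in the first row), there exists a 123-avoiding permutation σ of {1,…,n} with σ(1) = j and (i, σ(i)) ∉ B_n(m,t) for all i ≥ 2; in particular σ intersects B_n(m,t) exactly once, at the position (1, j). -/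
private def gfun (n m t j0 i : ℕ) : ℕ :=
  if i = 0 then j0
  else if i + m ≤ n then n - i
  else if i + t + 1 ≤ n then j0 + (n - m) - i
  else if i + j0 + t + 2 ≤ n + m then n + m - t - 1 - i
  else n - 1 - i

/-- membership in the "second chain" (big values / middle block) -/
private def chB (n m t j0 i : ℕ) : Prop :=
  i ≠ 0 ∧ (i + m ≤ n ∨ (n < i + t + 1 ∧ i + j0 + t + 2 ≤ n + m))

private lemma gfun_lt (n m t j0 i : ℕ) (hmn : m ≤ n) (ht : t + 1 ≤ m)
    (hj1 : m ≤ j0 + 1 + t) (hj2 : j0 + 1 ≤ m) (hi : i < n) :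
    gfun n m t j0 i < n := by
  unfold gfun; split_ifs <;> omega

private lemma gfun_inj (n m t j0 a b : ℕ) (hmn : m ≤ n) (ht : t + 1 ≤ m)
    (hj1 : m ≤ j0 + 1 + t) (hj2 : j0 + 1 ≤ m) (hab : a < b) (hb : b < n) :
    gfun n m t j0 a ≠ gfun n m t j0 b := by
  unfold gfun; split_ifs <;> omega

private lemma gfun_chain (n m t j0 a b : ℕ) (hmn : m ≤ n) (ht : t + 1 ≤ m)
    (hj1 : m ≤ j0 + 1 + t) (hj2 : j0 + 1 ≤ m) (hab : a < b) (hb : b < n)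
    (hch : chB n m t j0 a ↔ chB n m t j0 b) :
    gfun n m t j0 b < gfun n m t j0 a := by
  unfold gfun chB at *; split_ifs <;> omega

private lemma gfun_blocker (n m t j0 i : ℕ) (hmn : m ≤ n) (ht : t + 1 ≤ m)
    (hj1 : m ≤ j0 + 1 + t) (hj2 : j0 + 1 ≤ m) (hi0 : i ≠ 0) (hi : i < n) :
    ¬ ((gfun n m t j0 i + 1 = m ∧ i + 1 + t ≤ n) ∨
       (i + m ≤ n ∧ m ≤ gfun n m t j0 i + 1 + t ∧ gfun n m t j0 i + 2 ≤ m)) := by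
  unfold gfun; split_ifs <;> omega

/-- for every position `(1, j)` of `B_n(m,t)` in the first row
(i.e. `m - t ≤ j ≤ m` in `1`-based coordinates), there is a `123`-avoiding
permutation `σ` with `σ(1) = j` which avoids the blocker in all rows `i ≥ 2`;
in particular it meets the blocker exactly once, at `(1, j)`. -/
theorem flagBlocker_first_row_once (n m t : ℕ) (hn : 0 < n) (hm1 : 1 ≤ m)
    (hmn : m ≤ n) (ht : t + 1 ≤ m) (j : Fin n)
    (hj1 : m ≤ (j : ℕ) + 1 + t) (hj2 : (j : ℕ) + 1 ≤ m) :
    ∃ σ : Equiv.Perm (Fin n), Avoids123 σ ∧ σ ⟨0, hn⟩ = j ∧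
      ∀ i : Fin n, i ≠ ⟨0, hn⟩ → (i, σ i) ∉ FlagBlocker n m t := by
  set j0 : ℕ := (j : ℕ) with hj0
  let f : Fin n → Fin n := fun i =>
    ⟨gfun n m t j0 i, gfun_lt n m t j0 i hmn ht hj1 hj2 i.isLt⟩
  have hfdef : ∀ i : Fin n, (f i : ℕ) = gfun n m t j0 i := fun i => rfl
  have hinj : Function.Injective f := by
    intro a b hab
    by_contra hne
    rcases Nat.lt_or_ge (a : ℕ) (b : ℕ) with h | h
    · exact gfun_inj n m t j0 a b hmn ht hj1 hj2 h b.isLt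
        (by rw [← hfdef, ← hfdef, hab])
    · have h' : (b : ℕ) < (a : ℕ) := by
        rcases Nat.lt_or_ge (b : ℕ) (a : ℕ) with h' | h'
        · exact h'
        · exact absurd (Fin.ext (le_antisymm h h')) (fun hh => hne hh.symm)
      exact gfun_inj n m t j0 b a hmn ht hj1 hj2 h' a.isLt
        (by rw [← hfdef, ← hfdef, hab])
  have hbij : Function.Bijective f := Finite.injective_iff_bijective.mp hinj
  refine ⟨Equiv.ofBijective f hbij, ?_, ?_, ?_⟩
  · intro a b c hab hbc h1 h2
    simp only [Equiv.ofBijective_apply] at h1 h2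
    have h1' : gfun n m t j0 a < gfun n m t j0 b := h1
    have h2' : gfun n m t j0 b < gfun n m t j0 c := h2
    have hab' : (a : ℕ) < b := hab
    have hbc' : (b : ℕ) < c := hbc
    by_cases c1 : chB n m t j0 a ↔ chB n m t j0 b
    · exact absurd h1' (Nat.lt_asymm
        (gfun_chain n m t j0 a b hmn ht hj1 hj2 hab' b.isLt c1))
    · by_cases c2 : chB n m t j0 b ↔ chB n m t j0 c
      · exact absurd h2' (Nat.lt_asymm
          (gfun_chain n m t j0 b c hmn ht hj1 hj2 hbc' c.isLt c2))
      · have c3 : chB n m t j0 a ↔ chB n m t j0 c := by tauto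
        have := gfun_chain n m t j0 a c hmn ht hj1 hj2 (hab'.trans hbc') c.isLt c3
        omega
  · apply Fin.ext
    simp only [Equiv.ofBijective_apply, hfdef]
    unfold gfun
    simp
    exact hj0
  · intro i hi hmem
    have hi0 : (i : ℕ) ≠ 0 := fun h => hi (Fin.ext h)
    have := gfun_blocker n m t j0 i hmn ht hj1 hj2 hi0 i.isLt
    apply this
    simpa [FlagBlocker, hfdef] using hmem
end

section
/- Let n, a, b be integers with a ≥ 2, b ≥ 2 and a + b ≤ n − 1 (so that a·b is a composite number). Then there exist integers m, t with 1 ≤ m ≤ n and 0 ≤ t ≤ m − 1 such that t(n − m) = ab (for instance m = n − b and t = a); consequently there exists an n×n flag-shaped blocker B_n(m,t) of cardinality exactly n + ab. -/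
lemma card_filter_fin (n : ℕ) (P : ℕ → Prop) [DecidablePred P] :
    (Finset.univ.filter fun i : Fin n => P (i : ℕ)).card
      = ((Finset.range n).filter P).card := by
  rw [Finset.card_filter, Finset.card_filter]
  exact Fin.sum_univ_eq_sum_range (fun i => if P i then 1 else 0) n

lemma flag_card (n m t : ℕ) (h1 : 1 ≤ m) (h2 : m ≤ n) (h3 : t + 1 ≤ m) :
    (FlagBlocker n m t).ncard = n - t + (n - m + 1) * t := by
  classical
  have key : FlagBlocker n m t =
      ↑((Finset.univ ×ˢ Finset.univ).filter fun p : Fin n × Fin n =>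
        (((p.2 : ℕ) + 1 = m) ∧ ((p.1 : ℕ) + 1 + t ≤ n)) ∨
        ((((p.1 : ℕ) + m ≤ n)) ∧ (m ≤ (p.2 : ℕ) + 1 + t ∧ (p.2 : ℕ) + 2 ≤ m))) := by
    ext p
    simp [FlagBlocker, and_assoc]
  rw [key, Set.ncard_coe_finset]
  rw [Finset.filter_or, Finset.card_union_of_disjoint]
  · have e1 : ((Finset.univ ×ˢ Finset.univ).filter fun p : Fin n × Fin n =>
        (((p.2 : ℕ) + 1 = m) ∧ ((p.1 : ℕ) + 1 + t ≤ n)))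
        = (Finset.univ.filter fun i : Fin n => (i : ℕ) + 1 + t ≤ n) ×ˢ
          (Finset.univ.filter fun j : Fin n => (j : ℕ) + 1 = m) := by
      ext p
      simp [Finset.mem_filter, and_comm, and_assoc]
    have e2 : ((Finset.univ ×ˢ Finset.univ).filter fun p : Fin n × Fin n =>
        ((((p.1 : ℕ) + m ≤ n)) ∧ (m ≤ (p.2 : ℕ) + 1 + t ∧ (p.2 : ℕ) + 2 ≤ m)))
        = (Finset.univ.filter fun i : Fin n => (i : ℕ) + m ≤ n) ×ˢ
          (Finset.univ.filter fun j : Fin n => m ≤ (j : ℕ) + 1 + t ∧ (j : ℕ) + 2 ≤ m) := by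
      ext p
      simp [Finset.mem_filter, and_assoc]
    rw [e1, e2, Finset.card_product, Finset.card_product]
    rw [card_filter_fin n (fun i => i + 1 + t ≤ n), card_filter_fin n (fun j => j + 1 = m),
      card_filter_fin n (fun i => i + m ≤ n),
      card_filter_fin n (fun j => m ≤ j + 1 + t ∧ j + 2 ≤ m)]
    have c1 : ((Finset.range n).filter fun i => i + 1 + t ≤ n) = Finset.range (n - t) := by
      ext x; simp [Finset.mem_filter]; omega
    have c2 : ((Finset.range n).filter fun j => j + 1 = m) = {m - 1} := by
      ext x; simp [Finset.mem_filter]; omega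
    have c3 : ((Finset.range n).filter fun i => i + m ≤ n) = Finset.range (n - m + 1) := by
      ext x; simp [Finset.mem_filter]; omega
    have c4 : ((Finset.range n).filter fun j => m ≤ j + 1 + t ∧ j + 2 ≤ m)
        = Finset.Ico (m - t - 1) (m - 1) := by
      ext x; simp [Finset.mem_filter]; omega
    rw [c1, c2, c3, c4]
    simp [Nat.card_Ico]
    omega
  · rw [Finset.disjoint_filter]
    rintro p - ⟨h, -⟩ ⟨-, -, h'⟩
    omega

/-- for `a, b ≥ 2` with `a + b ≤ n - 1`, there are `m, t` with
`1 ≤ m ≤ n`, `0 ≤ t ≤ m - 1` and `t * (n - m) = a * b`; consequently there is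
a flag-shaped blocker `B_n(m,t)` of cardinality exactly `n + a * b`. -/
theorem flagBlocker_card_composite_excess (n a b : ℕ) (ha : 2 ≤ a) (hb : 2 ≤ b)
    (hab : a + b + 1 ≤ n) :
    ∃ m t : ℕ, 1 ≤ m ∧ m ≤ n ∧ t + 1 ≤ m ∧ t * (n - m) = a * b ∧
      (FlagBlocker n m t).ncard = n + a * b := by
  refine ⟨n - b, a, by omega, by omega, by omega, ?_, ?_⟩
  · have : n - (n - b) = b := by omega
    rw [this]
  · rw [flag_card n (n - b) a (by omega) (by omega) (by omega)]
    have h1 : n - (n - b) + 1 = b + 1 := by omega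
    rw [h1]
    have : (b + 1) * a = a * b + a := by ring
    omega
end

section
/- Let n, t be integers with 0 ≤ t ≤ n − 2 and set m = n − 1, and let B_n(n−1, t) be the flag-shaped blocker. If σ is a 123-avoiding permutation of {1,…,n} that intersects B_n(n−1, t) exactly once, then σ(i) ≠ n for every row i with n − t + 1 ≤ i ≤ n; that is, none of the t positions (i, n) with n − t + 1 ≤ i ≤ n lies on the permutation matrix of σ. -/
/-- for the flag-shaped blocker `B_n(n-1, t)` (`0 ≤ t ≤ n - 2`),
no `123`-avoiding permutation meeting the blocker exactly once uses any of the
`t` positions `(i, n)` with `n - t + 1 ≤ i ≤ n` (`1`-based coordinates). -/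
theorem flagBlocker_lastCol_unused (n t : ℕ) (ht : t + 2 ≤ n)
    (σ : Equiv.Perm (Fin n)) (hσ : Avoids123 σ)
    (honce : ∃! i : Fin n, (i, σ i) ∈ FlagBlocker n (n - 1) t) :
    ∀ i : Fin n, n ≤ (i : ℕ) + t → (σ i : ℕ) + 1 ≠ n := by
  intro i hi hcol
  have hin : (i : ℕ) < n := i.isLt
  have hn2 : 2 ≤ n := by omega
  have hi2 : 2 ≤ (i : ℕ) := by omega
  -- every other value is smaller than σ i
  have hmax : ∀ k : Fin n, k ≠ i → (σ k : ℕ) < σ i := by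
    intro k hk
    have h1 : σ k ≠ σ i := fun h => hk (σ.injective h)
    have h2 : (σ k : ℕ) < n := (σ k).isLt
    have : (σ k : ℕ) ≠ (σ i : ℕ) := fun h => h1 (Fin.ext h)
    omega
  -- σ is strictly decreasing on rows before i
  have hdec : ∀ j k : Fin n, j < k → (k : ℕ) < i → (σ k : ℕ) < σ j := by
    intro j k hjk hki
    by_contra h
    have hji : j ≠ i := by
      intro h'; rw [h'] at hjk
      exact absurd (Fin.lt_iff_val_lt_val.mp hjk) (by omega)
    have hki' : k ≠ i := fun h' => by rw [h'] at hki; omega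
    have hne : σ j ≠ σ k := fun h' => (Fin.lt_iff_val_lt_val.mp hjk).ne (by
      have := σ.injective h'; omega)
    have hjk' : σ j < σ k := by
      have : (σ j : ℕ) ≠ σ k := fun h' => hne (Fin.ext h')
      exact Fin.lt_iff_val_lt_val.mpr (by omega)
    exact hσ j k i hjk (Fin.lt_iff_val_lt_val.mpr hki) hjk'
      (Fin.lt_iff_val_lt_val.mpr (hmax k hki'))
  -- lower bounds from the decreasing run
  have hbound : ∀ d k (hkn : k < n), k + d + 1 = (i : ℕ) →
      (i : ℕ) ≤ (σ ⟨k, hkn⟩ : ℕ) + k + 1 := by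
    intro d
    induction d with
    | zero => intro k hkn hk; omega
    | succ d ih =>
      intro k hkn hk
      have hk1n : k + 1 < n := by omega
      have h1 := ih (k + 1) hk1n (by omega)
      have h2 := hdec ⟨k, hkn⟩ ⟨k + 1, hk1n⟩
        (Fin.lt_iff_val_lt_val.mpr (by simp)) (by simpa using by omega)
      omega
  set z0 : Fin n := ⟨0, by omega⟩ with hz0
  set z1 : Fin n := ⟨1, by omega⟩ with hz1
  have hb0 : (i : ℕ) ≤ (σ z0 : ℕ) + 1 := by
    have := hbound ((i : ℕ) - 1) 0 (by omega) (by omega); simpa using this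
  have hb1 : (i : ℕ) ≤ (σ z1 : ℕ) + 2 := by
    have := hbound ((i : ℕ) - 2) 1 (by omega) (by omega); simpa using this
  have h01 : (σ z1 : ℕ) < σ z0 :=
    hdec z0 z1 (Fin.lt_iff_val_lt_val.mpr (by simp [hz0, hz1]))
      (by simp only [hz1, Fin.val_mk]; omega)
  have h0i : (σ z0 : ℕ) < σ i := hmax z0 (by
    intro h; rw [hz0] at h; apply_fun (Fin.val) at h; simp at h; omega)
  have h1i : (σ z1 : ℕ) < σ i := hmax z1 (by
    intro h; rw [hz1] at h; apply_fun (Fin.val) at h; simp at h; omega)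
  -- both row 0 and row 1 are hits
  have hv0 : (z0 : ℕ) = 0 := rfl
  have hv1 : (z1 : ℕ) = 1 := rfl
  have hm0 : (z0, σ z0) ∈ FlagBlocker n (n - 1) t := by
    show ((σ z0 : ℕ) + 1 = n - 1 ∧ (z0 : ℕ) + 1 + t ≤ n) ∨
      ((z0 : ℕ) + (n - 1) ≤ n ∧ n - 1 ≤ (σ z0 : ℕ) + 1 + t ∧ (σ z0 : ℕ) + 2 ≤ n - 1)
    omega
  have hm1 : (z1, σ z1) ∈ FlagBlocker n (n - 1) t := by
    show ((σ z1 : ℕ) + 1 = n - 1 ∧ (z1 : ℕ) + 1 + t ≤ n) ∨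
      ((z1 : ℕ) + (n - 1) ≤ n ∧ n - 1 ≤ (σ z1 : ℕ) + 1 + t ∧ (σ z1 : ℕ) + 2 ≤ n - 1)
    omega
  obtain ⟨i₀, _, huniq⟩ := honce
  have e0 := huniq z0 hm0
  have e1 := huniq z1 hm1
  rw [← e1] at e0
  apply_fun (Fin.val) at e0
  simp [hz0, hz1] at e0
end

section
/- Let n, m, t be integers with 1 ≤ m ≤ n and 0 ≤ t ≤ m−1, and let B_n(m,t) be the flag-shaped blocker. If σ is a 123-avoiding permutation of {1,…,n} that intersects B_n(m,t) exactly once, then σ(i) ≤ m for every row i with n − t + 1 ≤ i ≤ n; that is, none of the t(n−m) positions (i, j) with n − t + 1 ≤ i ≤ n and m + 1 ≤ j ≤ n lies on the permutation matrix of σ. -/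
open Finset in
private lemma card_filter_ico {n : ℕ} (c₁ c₂ : ℕ) (h : c₂ ≤ n) (P : Fin n → Prop)
    [DecidablePred P] (hP : ∀ v : Fin n, P v ↔ c₁ ≤ (v : ℕ) ∧ (v : ℕ) < c₂) :
    (univ.filter P).card = c₂ - c₁ := by
  have he : univ.filter P = (Finset.Ico c₁ c₂).attachFin
      (fun x hx => lt_of_lt_of_le (Finset.mem_Ico.mp hx).2 h) := by
    ext v
    simp [Finset.mem_attachFin, Finset.mem_Ico, hP]
  rw [he, Finset.card_attachFin, Nat.card_Ico]

open Finset in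
private lemma card_filter_perm {n : ℕ} (σ : Equiv.Perm (Fin n)) (Q : Fin n → Prop)
    [DecidablePred Q] :
    (univ.filter fun a => Q (σ a)).card = (univ.filter Q).card := by
  have h : (univ.filter fun a => Q (σ a))
      = Finset.map σ.symm.toEmbedding (univ.filter Q) := by
    ext a
    simp [Equiv.symm_apply_eq]
  rw [h, Finset.card_map]

/-- no `123`-avoiding permutation meeting the flag-shaped blocker
`B_n(m,t)` exactly once uses any of the `t(n-m)` positions `(i, j)` with
`n - t + 1 ≤ i ≤ n` and `m + 1 ≤ j ≤ n` (`1`-based coordinates); that is, in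
those rows it satisfies `σ(i) ≤ m`. -/
theorem flagBlocker_corner_unused (n m t : ℕ) (hm1 : 1 ≤ m) (hmn : m ≤ n)
    (ht : t + 1 ≤ m) (σ : Equiv.Perm (Fin n)) (hσ : Avoids123 σ)
    (honce : ∃! i : Fin n, (i, σ i) ∈ FlagBlocker n m t) :
    ∀ i : Fin n, n ≤ (i : ℕ) + t → (σ i : ℕ) + 1 ≤ m := by
  classical
  intro i₀ hi₀
  by_contra hbig
  push_neg at hbig
  have hσi₀ : m ≤ (σ i₀ : ℕ) := by omega
  have hn1 : 1 ≤ n := le_trans hm1 hmn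
  have ht1 : 1 ≤ t := by
    rcases Nat.eq_zero_or_pos t with h0 | h; · have := i₀.isLt; omega
    · exact h
  obtain ⟨q, hq, huniq⟩ := honce
  have hhit : ∀ a : Fin n, ((a, σ a) ∈ FlagBlocker n m t) ↔
      (((σ a : ℕ) + 1 = m ∧ (a : ℕ) + 1 + t ≤ n) ∨
       ((a : ℕ) + m ≤ n ∧ m ≤ (σ a : ℕ) + 1 + t ∧ (σ a : ℕ) + 2 ≤ m)) := fun a => Iff.rfl
  rw [hhit] at hq
  have huniq' : ∀ a : Fin n,
      (((σ a : ℕ) + 1 = m ∧ (a : ℕ) + 1 + t ≤ n) ∨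
       ((a : ℕ) + m ≤ n ∧ m ≤ (σ a : ℕ) + 1 + t ∧ (σ a : ℕ) + 2 ≤ m)) → a = q :=
    fun a ha => huniq a ((hhit a).mpr ha)
  have triple : ∀ a b c : Fin n, (a:ℕ) < (b:ℕ) → (b:ℕ) < (c:ℕ) →
      (σ a : ℕ) < (σ b : ℕ) → (σ b : ℕ) < (σ c : ℕ) → False := fun a b c h1 h2 h3 h4 =>
    hσ a b c (Fin.lt_def.mpr h1) (Fin.lt_def.mpr h2) (Fin.lt_def.mpr h3) (Fin.lt_def.mpr h4)
  -- the row of value m (0-based value m-1)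
  set r : Fin n := σ.symm ⟨m - 1, by omega⟩ with hrdef
  have hσr : (σ r : ℕ) = m - 1 := by rw [hrdef, Equiv.apply_symm_apply]
  have hri₀ : r ≠ i₀ := by
    intro h; rw [h] at hσr; omega
  -- W : rows of the flag-column values
  set W : Finset (Fin n) :=
    Finset.univ.filter (fun a => m ≤ (σ a : ℕ) + t + 1 ∧ (σ a : ℕ) + 2 ≤ m) with hWdef
  have hWcard : W.card = t := by
    rw [hWdef, card_filter_perm σ (fun v => m ≤ (v : ℕ) + t + 1 ∧ (v : ℕ) + 2 ≤ m),
      card_filter_ico (m - t - 1) (m - 1) (by omega) _ (fun v => by omega)]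
    omega
  have hi₀W : i₀ ∉ W := by
    rw [hWdef]; simp only [Finset.mem_filter]; push_neg; intro _ _; omega
  have hrW : r ∉ W := by
    rw [hWdef]; simp only [Finset.mem_filter]; push_neg; intro _ _; omega
  -- card of the set of rows ≥ some bound
  have hIci : ∀ c : ℕ, (Finset.univ.filter (fun a : Fin n => c ≤ (a : ℕ))).card = n - c := by
    intro c
    rw [card_filter_ico c n (le_refl n) _ (fun v => by have := v.isLt; omega)]
  -- main counting engine
  have key : ∀ p : Fin n, n + 1 ≤ (p : ℕ) + m → ∀ S : Finset (Fin n),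
      m - 1 ≤ S.card → (∀ v ∈ S, (p : ℕ) < (σ.symm v : ℕ)) → False := by
    intro p hp S hScard hrows
    have h1 : S.card ≤ (Finset.univ.filter (fun a : Fin n => (p : ℕ) + 1 ≤ (a : ℕ))).card := by
      apply Finset.card_le_card_of_injOn (fun v => σ.symm v)
      · intro v hv
        simp only [Finset.mem_coe, Finset.mem_filter, Finset.mem_univ, true_and]
        have := hrows v hv; omega
      · exact σ.symm.injective.injOn
    rw [hIci ((p : ℕ) + 1)] at h1
    have := p.isLt
    omega
  by_cases hr : (r : ℕ) + t + 1 ≤ n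
  · -- Case A : the pole is hit at row r, no flag hit
    have hqr : r = q := huniq' r (Or.inl ⟨by omega, by omega⟩)
    have hnoflag : ∀ a ∈ W, n + 1 ≤ (a : ℕ) + m := by
      intro a ha
      rw [hWdef, Finset.mem_filter] at ha
      by_contra h
      have : a = q := huniq' a (Or.inr ⟨by omega, by omega, ha.2.2⟩)
      rw [this, ← hqr] at ha
      omega
    have hWne : W.Nonempty := by
      rw [← Finset.card_pos, hWcard]; omega
    set k : Fin n := W.min' hWne with hkdef
    have hkW : k ∈ W := W.min'_mem hWne
    have hkle : ∀ a ∈ W, (k : ℕ) ≤ (a : ℕ) := fun a ha => Fin.le_def.mp (W.min'_le a ha)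
    have hkWf := Finset.mem_filter.mp (hWdef ▸ hkW)
    have hkv1 : m ≤ (σ k : ℕ) + t + 1 := hkWf.2.1
    have hkv2 : (σ k : ℕ) + 2 ≤ m := hkWf.2.2
    have hkm : n + 1 ≤ (k : ℕ) + m := hnoflag k hkW
    have hki₀ : (k : ℕ) < (i₀ : ℕ) := by
      by_contra h
      push_neg at h
      have hsub : insert i₀ W ⊆ Finset.univ.filter (fun a : Fin n => (i₀ : ℕ) ≤ (a : ℕ)) := by
        intro a ha
        rcases Finset.mem_insert.mp ha with h1 | h1
        · subst h1; simp
        · simp only [Finset.mem_filter, Finset.mem_univ, true_and]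
          exact le_trans h (hkle a h1)
      have hc := Finset.card_le_card hsub
      rw [Finset.card_insert_of_notMem hi₀W, hWcard, hIci] at hc
      omega
    -- the contradiction set
    refine key k hkm (insert (σ i₀)
      ((Finset.univ.filter (fun v : Fin n => (v : ℕ) + 2 ≤ m)).erase (σ k))) ?_ ?_
    · have hcf : (Finset.univ.filter (fun v : Fin n => (v : ℕ) + 2 ≤ m)).card = m - 1 := by
        rw [card_filter_ico 0 (m - 1) (by omega) _ (fun v => by omega)]
        omega
      have hmem : σ k ∈ Finset.univ.filter (fun v : Fin n => (v : ℕ) + 2 ≤ m) := by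
        simp only [Finset.mem_filter, Finset.mem_univ, true_and]; exact hkv2
      have hnotin : σ i₀ ∉
          (Finset.univ.filter (fun v : Fin n => (v : ℕ) + 2 ≤ m)).erase (σ k) := by
        intro h
        have := (Finset.mem_filter.mp (Finset.mem_of_mem_erase h)).2
        omega
      rw [Finset.card_insert_of_notMem hnotin, Finset.card_erase_of_mem hmem, hcf]
      omega
    · intro v hv
      rcases Finset.mem_insert.mp hv with h1 | h1
      · subst h1; rw [Equiv.symm_apply_apply]; exact hki₀
      · have hvne : v ≠ σ k := Finset.ne_of_mem_erase h1
        have hv2 : (v : ℕ) + 2 ≤ m := (Finset.mem_filter.mp (Finset.mem_of_mem_erase h1)).2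
        set a : Fin n := σ.symm v with hadef
        have hσa : σ a = v := Equiv.apply_symm_apply σ v
        have hak : (a : ℕ) ≠ (k : ℕ) := by
          intro h
          apply hvne
          rw [← hσa]
          congr 1
          exact Fin.ext h
        rcases lt_or_gt_of_ne (fun h : (v : ℕ) = (σ k : ℕ) => hvne (Fin.ext h)) with hlt | hgt
        · -- v < σ k : a must be after k, else 123 pattern (a, k, i₀)
          by_contra h
          push_neg at h
          have hak' : (a : ℕ) < (k : ℕ) := by omega
          exact triple a k i₀ hak' hki₀ (by rw [hσa]; exact hlt) (by omega)
        · -- σ k < v : v is a flag-column value, so a ∈ W and k < a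
          have haW : a ∈ W := by
            rw [hWdef]; simp only [Finset.mem_filter, Finset.mem_univ, true_and]
            rw [hσa]
            constructor <;> omega
          have := hkle a haW
          omega
  · -- Case B : value m sits in the last t rows; the unique hit is a flag hit at q
    push_neg at hr
    have hqflag : (q : ℕ) + m ≤ n ∧ m ≤ (σ q : ℕ) + 1 + t ∧ (σ q : ℕ) + 2 ≤ m := by
      rcases hq with hpole | hflag
      · exfalso
        have : q = r := by
          have : σ q = σ r := Fin.ext (by omega)
          exact σ.injective this
        rw [this] at hpole
        omega
      · exact hflag
    have hqW : q ∈ W := by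
      rw [hWdef]; simp only [Finset.mem_filter, Finset.mem_univ, true_and]
      exact ⟨by omega, hqflag.2.2⟩
    have hflaguniq : ∀ a ∈ W, (a : ℕ) + m ≤ n → a = q := by
      intro a ha hle
      rw [hWdef, Finset.mem_filter] at ha
      exact huniq' a (Or.inr ⟨hle, by omega, ha.2.2⟩)
    -- existence of a middle element of W
    have hmid : ∃ a ∈ W, n + 1 ≤ (a : ℕ) + m ∧ (a : ℕ) + t + 1 ≤ n := by
      by_contra hno
      push_neg at hno
      set W₂ : Finset (Fin n) := W.filter (fun a => n ≤ (a : ℕ) + t) with hW₂def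
      have hsub : W ⊆ insert q W₂ := by
        intro a ha
        rcases le_or_gt ((a : ℕ) + m) n with h1 | h1
        · exact Finset.mem_insert.mpr (Or.inl (hflaguniq a ha h1))
        · refine Finset.mem_insert.mpr (Or.inr ?_)
          rw [hW₂def, Finset.mem_filter]
          have := hno a ha h1
          exact ⟨ha, by omega⟩
      have hc1 : W.card ≤ W₂.card + 1 := by
        have := Finset.card_le_card hsub
        have := Finset.card_insert_le q W₂
        omega
      have hsub2 : insert r (insert i₀ W₂) ⊆
          Finset.univ.filter (fun a : Fin n => n - t ≤ (a : ℕ)) := by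
        intro a ha
        simp only [Finset.mem_filter, Finset.mem_univ, true_and]
        rcases Finset.mem_insert.mp ha with h1 | h1
        · subst h1; omega
        rcases Finset.mem_insert.mp h1 with h2 | h2
        · subst h2; omega
        · rw [hW₂def, Finset.mem_filter] at h2
          omega
      have hrni : r ∉ insert i₀ W₂ := by
        intro h
        rcases Finset.mem_insert.mp h with h1 | h1
        · exact hri₀ h1
        · exact hrW (Finset.mem_of_mem_filter r h1)
      have hini : i₀ ∉ W₂ := fun h => hi₀W (Finset.mem_of_mem_filter i₀ h)
      have hc2 := Finset.card_le_card hsub2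
      rw [Finset.card_insert_of_notMem hrni, Finset.card_insert_of_notMem hini, hIci] at hc2
      omega
    obtain ⟨a₀, ha₀W, ha₀1, ha₀2⟩ := hmid
    set Wmid : Finset (Fin n) := W.filter (fun a => n + 1 ≤ (a : ℕ) + m) with hWmdef
    have hWmne : Wmid.Nonempty := ⟨a₀, by rw [hWmdef, Finset.mem_filter]; exact ⟨ha₀W, ha₀1⟩⟩
    set k : Fin n := Wmid.min' hWmne with hkdef
    have hkWm : k ∈ Wmid := Wmid.min'_mem hWmne
    have hkle : ∀ a ∈ Wmid, (k : ℕ) ≤ (a : ℕ) := fun a ha => Fin.le_def.mp (Wmid.min'_le a ha)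
    have hkW : k ∈ W := Finset.mem_of_mem_filter k hkWm
    have hkm : n + 1 ≤ (k : ℕ) + m := by
      have h := hkWm; rw [hWmdef, Finset.mem_filter] at h; exact h.2
    have hkWf := Finset.mem_filter.mp (hWdef ▸ hkW)
    have hkv1 : m ≤ (σ k : ℕ) + t + 1 := hkWf.2.1
    have hkv2 : (σ k : ℕ) + 2 ≤ m := hkWf.2.2
    have hknt : (k : ℕ) + t + 1 ≤ n := le_trans (by have := hkle a₀ (by
      rw [hWmdef, Finset.mem_filter]; exact ⟨ha₀W, ha₀1⟩); omega) ha₀2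
    have hki₀ : (k : ℕ) < (i₀ : ℕ) := by omega
    have hqk : (q : ℕ) < (k : ℕ) := by
      have := hqflag.1; omega
    have hqkne : σ q ≠ σ k := fun h => by
      have : q = k := σ.injective h
      rw [this] at hqk; omega
    have hjlt : (σ k : ℕ) < (σ q : ℕ) := by
      rcases lt_or_gt_of_ne (fun h : (σ q : ℕ) = (σ k : ℕ) => hqkne (Fin.ext h)) with h | h
      · exact absurd (triple q k i₀ hqk hki₀ h (by omega)) not_false
      · exact h
    -- contradiction set
    refine key k hkm (insert (σ i₀)
      (((Finset.univ.filter (fun v : Fin n => (v : ℕ) < m)).erase (σ q)).erase (σ k))) ?_ ?_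
    · have hcf : (Finset.univ.filter (fun v : Fin n => (v : ℕ) < m)).card = m := by
        rw [card_filter_ico 0 m hmn _ (fun v => by omega)]
        omega
      have hmemq : σ q ∈ Finset.univ.filter (fun v : Fin n => (v : ℕ) < m) := by
        simp only [Finset.mem_filter, Finset.mem_univ, true_and]
        have := hqflag.2.2; omega
      have hmemk : σ k ∈ (Finset.univ.filter (fun v : Fin n => (v : ℕ) < m)).erase (σ q) := by
        refine Finset.mem_erase.mpr ⟨fun h => hqkne h.symm, ?_⟩
        simp only [Finset.mem_filter, Finset.mem_univ, true_and]
        omega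
      have hnotin : σ i₀ ∉
          ((Finset.univ.filter (fun v : Fin n => (v : ℕ) < m)).erase (σ q)).erase (σ k) := by
        intro h
        have := (Finset.mem_filter.mp
          (Finset.mem_of_mem_erase (Finset.mem_of_mem_erase h))).2
        omega
      rw [Finset.card_insert_of_notMem hnotin, Finset.card_erase_of_mem hmemk,
        Finset.card_erase_of_mem hmemq, hcf]
      omega
    · intro v hv
      rcases Finset.mem_insert.mp hv with h1 | h1
      · subst h1; rw [Equiv.symm_apply_apply]; exact hki₀
      · have hvnek : v ≠ σ k := Finset.ne_of_mem_erase h1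
        have hvneq : v ≠ σ q := Finset.ne_of_mem_erase (Finset.mem_of_mem_erase h1)
        have hvm : (v : ℕ) < m := (Finset.mem_filter.mp
          (Finset.mem_of_mem_erase (Finset.mem_of_mem_erase h1))).2
        set a : Fin n := σ.symm v with hadef
        have hσa : σ a = v := Equiv.apply_symm_apply σ v
        have hak : (a : ℕ) ≠ (k : ℕ) := by
          intro h
          exact hvnek (by rw [← hσa]; exact congrArg σ (Fin.ext h))
        rcases lt_or_gt_of_ne (fun h : (v : ℕ) = (σ k : ℕ) => hvnek (Fin.ext h)) with hlt | hgt
        · by_contra h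
          push_neg at h
          have hak' : (a : ℕ) < (k : ℕ) := by omega
          exact triple a k i₀ hak' hki₀ (by rw [hσa]; exact hlt) (by omega)
        · by_cases hv2 : (v : ℕ) + 2 ≤ m
          · -- v is a flag-column value
            have haW : a ∈ W := by
              rw [hWdef]; simp only [Finset.mem_filter, Finset.mem_univ, true_and]
              rw [hσa]
              constructor <;> omega
            rcases le_or_gt ((a : ℕ) + m) n with hle | hgt2
            · exfalso
              have : a = q := hflaguniq a haW hle
              exact hvneq (by rw [← hσa, this])
            · have haWm : a ∈ Wmid := by
                rw [hWmdef, Finset.mem_filter]; exact ⟨haW, by omega⟩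
              have := hkle a haWm
              omega
          · -- v = m - 1, so a = r which is in the last t rows
            have : v = σ r := Fin.ext (by rw [hσr]; omega)
            have har : a = r := by rw [hadef, this, Equiv.symm_apply_apply]
            rw [har]
            omega
end

section
/- Let n, m, t be integers with 1 ≤ m ≤ n and 0 ≤ t ≤ m−1, and let B_n(m,t) be the flag-shaped blocker. If S is a family of permutation matrices of 123-avoiding permutations of {1,…,n}, each of which intersects B_n(m,t) exactly once, and the matrices in S are linearly independent over ℝ, then |S| ≤ (n−1)² + 1 − t(n−m). -/
open Finset

lemma cardFilterFin (n : ℕ) (P : ℕ → Prop) [DecidablePred P] (a b : ℕ)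
    (h : ∀ x, x < n → (P x ↔ a ≤ x ∧ x < b)) (hb : b ≤ n) :
    (Finset.univ.filter fun i : Fin n => P (i : ℕ)).card = b - a := by
  rw [Finset.card_filter, Fin.sum_univ_eq_sum_range (fun i => if P i then 1 else 0),
    ← Finset.card_filter]
  rw [show (Finset.range n).filter P = Finset.Ico a b by
    ext x; simp only [Finset.mem_filter, Finset.mem_range, Finset.mem_Ico]
    constructor
    · rintro ⟨hx, hp⟩; exact (h x hx).1 hp
    · rintro ⟨ha, hx⟩; exact ⟨by omega, (h x (by omega)).2 ⟨ha, hx⟩⟩]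
  exact Nat.card_Ico a b

lemma two_hits (n m t : ℕ) (hm1 : 1 ≤ m) (hmn : m ≤ n) (ht : t + 1 ≤ m)
    (σ : Equiv.Perm (Fin n)) (hav : Avoids123 σ) (i₀ : Fin n)
    (hi₀ : n ≤ (i₀ : ℕ) + t) (hv₀ : m ≤ (σ i₀ : ℕ)) :
    ∃ i₁ i₂ : Fin n, i₁ ≠ i₂ ∧ (i₁, σ i₁) ∈ FlagBlocker n m t ∧
      (i₂, σ i₂) ∈ FlagBlocker n m t := by
  classical
  have hVcard : (Finset.univ.filter
      (fun v : Fin n => m ≤ (v : ℕ) + 1 + t ∧ (v : ℕ) < m)).card = t + 1 := by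
    have := cardFilterFin n (fun x => m ≤ x + 1 + t ∧ x < m) (m - 1 - t) m
      (fun x hx => by omega) hmn
    rw [this]; omega
  set V : Finset (Fin n) :=
    Finset.univ.filter (fun v : Fin n => m ≤ (v : ℕ) + 1 + t ∧ (v : ℕ) < m) with hV
  set T : Finset (Fin n) := V.filter (fun v => (σ.symm v : ℕ) + t < n) with hTdef
  -- |T| ≥ 2
  have hnotT : (V.filter (fun v => ¬ ((σ.symm v : ℕ) + t < n))).card ≤ t - 1 := by
    have hsub : (V.filter (fun v => ¬ ((σ.symm v : ℕ) + t < n))).card ≤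
        ((Finset.univ.filter fun i : Fin n => n ≤ (i : ℕ) + t).erase i₀).card := by
      apply Finset.card_le_card_of_injOn (fun v => σ.symm v)
      · intro v hv
        obtain ⟨hvV, hvn⟩ := Finset.mem_filter.mp hv
        rw [not_lt] at hvn
        obtain ⟨-, hv1, hv2⟩ := Finset.mem_filter.mp hvV
        refine Finset.mem_erase.mpr ⟨?_, Finset.mem_filter.mpr ⟨Finset.mem_univ _, hvn⟩⟩
        intro hcontra
        have hveq : v = σ i₀ := by
          have := congrArg σ hcontra; simpa using this
        rw [hveq] at hv2
        omega
      · exact Function.Injective.injOn σ.symm.injective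
    have hcard2 : (Finset.univ.filter fun i : Fin n => n ≤ (i : ℕ) + t).card = t := by
      have := cardFilterFin n (fun x => n ≤ x + t) (n - t) n (fun x hx => by omega) le_rfl
      rw [this]; omega
    have hmemi₀ : i₀ ∈ (Finset.univ.filter fun i : Fin n => n ≤ (i : ℕ) + t) :=
      Finset.mem_filter.mpr ⟨Finset.mem_univ _, hi₀⟩
    have hce := Finset.card_erase_of_mem hmemi₀
    rw [hce, hcard2] at hsub
    exact hsub
  have hT2 : 2 ≤ T.card := by
    have hsplit := Finset.card_filter_add_card_filter_not
      (s := V) (p := fun v => (σ.symm v : ℕ) + t < n)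
    rw [← hTdef] at hsplit
    omega
  have hTne : T.Nonempty := Finset.card_pos.mp (by omega)
  set a : Fin n := T.max' hTne with ha_def
  have haT : a ∈ T := T.max'_mem hTne
  have hTbne : (T.erase a).Nonempty := by
    rw [← Finset.card_pos, Finset.card_erase_of_mem haT]; omega
  set b : Fin n := (T.erase a).max' hTbne with hb_def
  have hbT' : b ∈ T.erase a := (T.erase a).max'_mem hTbne
  have hbT : b ∈ T := Finset.mem_of_mem_erase hbT'
  have hbnea : b ≠ a := Finset.ne_of_mem_erase hbT'
  have hTfact : ∀ v ∈ T, m ≤ (v : ℕ) + 1 + t ∧ (v : ℕ) < m ∧ (σ.symm v : ℕ) + t < n := by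
    intro v hv
    rw [hTdef] at hv
    simp only [hV, Finset.mem_filter, Finset.mem_univ, true_and] at hv
    exact ⟨hv.1.1, hv.1.2, hv.2⟩
  obtain ⟨haV1, haV2, haR⟩ := hTfact a haT
  obtain ⟨hbV1, hbV2, hbR⟩ := hTfact b hbT
  have hba : (b : ℕ) < (a : ℕ) := by
    rcases lt_or_gt_of_ne (fun h : (b : ℕ) = (a : ℕ) => hbnea (Fin.ext h)) with h | h
    · exact h
    · exact absurd (T.le_max' b hbT) (not_le.mpr h)
  have hrow_lt : ∀ v ∈ T, (σ.symm v : ℕ) < (i₀ : ℕ) := by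
    intro v hv
    have := (hTfact v hv).2.2
    omega
  -- decreasing lemma
  have F1 : ∀ v : Fin n, (v : ℕ) < m → (σ.symm v : ℕ) < (i₀ : ℕ) →
      ∀ u : Fin n, (u : ℕ) < (v : ℕ) → (σ.symm v : ℕ) < (σ.symm u : ℕ) := by
    intro v hvm hvr u huv
    by_contra hle
    push_neg at hle
    have hne : σ.symm u ≠ σ.symm v := fun h => by
      have : u = v := σ.symm.injective h
      rw [this] at huv; omega
    have hlt : (σ.symm u : ℕ) < (σ.symm v : ℕ) :=
      lt_of_le_of_ne hle (fun h => hne (Fin.ext h))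
    refine hav (σ.symm u) (σ.symm v) i₀ ?_ ?_ ?_ ?_
    · exact Fin.lt_def.mpr hlt
    · exact Fin.lt_def.mpr hvr
    · rw [Equiv.apply_symm_apply, Equiv.apply_symm_apply]; exact Fin.lt_def.mpr huv
    · rw [Equiv.apply_symm_apply]; exact Fin.lt_def.mpr (by omega)
  -- counting lemma
  have F2 : ∀ (r : Fin n) (Y : Finset (Fin n)),
      (∀ u ∈ Y, (r : ℕ) < (σ.symm u : ℕ)) → Y.card + (r : ℕ) + 1 ≤ n := by
    intro r Y hY
    have hle : Y.card ≤ (Finset.univ.filter fun i : Fin n => (r : ℕ) < (i : ℕ)).card := by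
      apply Finset.card_le_card_of_injOn (fun u => σ.symm u)
      · intro u hu
        exact Finset.mem_filter.mpr ⟨Finset.mem_univ _, hY u hu⟩
      · exact Function.Injective.injOn σ.symm.injective
    have hc : (Finset.univ.filter fun i : Fin n => (r : ℕ) < (i : ℕ)).card
        = n - ((r : ℕ) + 1) := by
      exact cardFilterFin n (fun x => (r : ℕ) < x) ((r : ℕ) + 1) n (fun x hx => by omega) le_rfl
    rw [hc] at hle
    have := r.isLt
    omega
  have hFmcard : (Finset.univ.filter (fun u : Fin n => (u : ℕ) < m)).card = m := by
    have := cardFilterFin n (fun x => x < m) 0 m (fun x hx => by omega) hmn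
    rw [this]
    omega
  set Fm : Finset (Fin n) := Finset.univ.filter (fun u : Fin n => (u : ℕ) < m) with hFm
  have haFm : a ∈ Fm := Finset.mem_filter.mpr ⟨Finset.mem_univ _, haV2⟩
  have hbFm' : b ∈ Fm.erase a := Finset.mem_erase.mpr
    ⟨hbnea, Finset.mem_filter.mpr ⟨Finset.mem_univ _, hbV2⟩⟩
  have hσi₀notFm : σ i₀ ∉ Fm := by
    simp only [hFm, Finset.mem_filter, Finset.mem_univ, true_and, not_lt]
    exact hv₀
  -- bound for row of a
  have hYa : (σ.symm a : ℕ) + m + 1 ≤ n := by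
    have hcard : (insert (σ i₀) (Fm.erase a)).card = m := by
      rw [Finset.card_insert_of_notMem (fun h => hσi₀notFm (Finset.mem_of_mem_erase h)),
        Finset.card_erase_of_mem haFm, hFmcard]
      omega
    have hbound := F2 (σ.symm a) (insert (σ i₀) (Fm.erase a)) ?_
    · rw [hcard] at hbound; omega
    intro u hu
    rcases Finset.mem_insert.mp hu with h | h
    · subst h
      rw [Equiv.symm_apply_apply]
      exact hrow_lt a haT
    · obtain ⟨hune, humem⟩ := Finset.mem_erase.mp h
      have hum : (u : ℕ) < m := (Finset.mem_filter.mp humem).2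
      rcases lt_or_gt_of_ne (fun h : (u : ℕ) = (a : ℕ) => hune (Fin.ext h)) with hcase | hcase
      · exact F1 a haV2 (hrow_lt a haT) u hcase
      · have huT : u ∉ T := fun hmem =>
          absurd (T.le_max' u hmem) (not_le.mpr (Fin.lt_def.mpr hcase))
        have hun : ¬ ((σ.symm u : ℕ) + t < n) := fun hc => huT (by
          rw [hTdef]
          exact Finset.mem_filter.mpr ⟨Finset.mem_filter.mpr
            ⟨Finset.mem_univ _, by omega, hum⟩, hc⟩)
        omega
  -- bound for row of b
  have hYb : (σ.symm b : ℕ) + m ≤ n := by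
    have hcard : (insert (σ i₀) ((Fm.erase a).erase b)).card = m - 1 := by
      rw [Finset.card_insert_of_notMem
          (fun h => hσi₀notFm (Finset.mem_of_mem_erase (Finset.mem_of_mem_erase h))),
        Finset.card_erase_of_mem hbFm', Finset.card_erase_of_mem haFm, hFmcard]
      omega
    have hbound := F2 (σ.symm b) (insert (σ i₀) ((Fm.erase a).erase b)) ?_
    · rw [hcard] at hbound; omega
    intro u hu
    rcases Finset.mem_insert.mp hu with h | h
    · subst h
      rw [Equiv.symm_apply_apply]
      exact hrow_lt b hbT
    · obtain ⟨hunb, h2⟩ := Finset.mem_erase.mp h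
      obtain ⟨huna, humem⟩ := Finset.mem_erase.mp h2
      have hum : (u : ℕ) < m := (Finset.mem_filter.mp humem).2
      rcases lt_or_gt_of_ne (fun h : (u : ℕ) = (b : ℕ) => hunb (Fin.ext h)) with hcase | hcase
      · exact F1 b hbV2 (hrow_lt b hbT) u hcase
      · have huT : u ∉ T := by
          intro hmem
          have hmem' : u ∈ T.erase a := Finset.mem_erase.mpr ⟨huna, hmem⟩
          exact absurd ((T.erase a).le_max' u hmem') (not_le.mpr (Fin.lt_def.mpr hcase))
        have hun : ¬ ((σ.symm u : ℕ) + t < n) := fun hc => huT (by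
          rw [hTdef]
          exact Finset.mem_filter.mpr ⟨Finset.mem_filter.mpr
            ⟨Finset.mem_univ _, by omega, hum⟩, hc⟩)
        omega
  -- build the two hits
  refine ⟨σ.symm a, σ.symm b, ?_, ?_, ?_⟩
  · intro h
    exact hbnea (σ.symm.injective h.symm)
  · simp only [FlagBlocker, Set.mem_setOf_eq, Equiv.apply_symm_apply]
    by_cases hc : (a : ℕ) + 1 = m
    · left; exact ⟨hc, by omega⟩
    · right; exact ⟨by omega, by omega, by omega⟩
  · simp only [FlagBlocker, Set.mem_setOf_eq, Equiv.apply_symm_apply]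
    right; exact ⟨by omega, by omega, by omega⟩
open Finset

def goodP (n m t : ℕ) (p : Fin n × Fin n) : Prop :=
  (p.1 : ℕ) ≠ 0 ∧ (p.2 : ℕ) ≠ 0 ∧ ¬ (n ≤ (p.1 : ℕ) + t ∧ m ≤ (p.2 : ℕ))

instance (n m t : ℕ) : DecidablePred (goodP n m t) := fun p => by
  unfold goodP; infer_instance

def phiMap (n m t : ℕ) (z : Fin n) :
    Matrix (Fin n) (Fin n) ℝ →ₗ[ℝ] (Option {p : Fin n × Fin n // goodP n m t p} → ℝ) where
  toFun M o := o.elim (∑ j, M z j) (fun p => M p.1.1 p.1.2)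
  map_add' M N := by
    funext o
    cases o <;>
      simp [Matrix.add_apply, Finset.sum_add_distrib, Option.elim]
  map_smul' c M := by
    funext o
    cases o <;>
      simp [Matrix.smul_apply, Finset.mul_sum, Option.elim]

def Wsub (n m t : ℕ) (z : Fin n) : Submodule ℝ (Matrix (Fin n) (Fin n) ℝ) where
  carrier := {M | (∀ i i', ∑ j, M i j = ∑ j, M i' j) ∧
    (∀ j, ∑ i, M i j = ∑ j', M z j') ∧
    (∀ i j : Fin n, n ≤ (i : ℕ) + t → m ≤ (j : ℕ) → M i j = 0)}
  add_mem' := by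
    rintro a b ⟨ha1, ha2, ha3⟩ ⟨hb1, hb2, hb3⟩
    refine ⟨fun i i' => ?_, fun j => ?_, fun i j h1 h2 => ?_⟩ <;>
      simp only [Matrix.add_apply, Finset.sum_add_distrib]
    · rw [ha1 i i', hb1 i i']
    · rw [ha2 j, hb2 j]
    · rw [ha3 i j h1 h2, hb3 i j h1 h2, add_zero]
  zero_mem' := by
    refine ⟨fun i i' => ?_, fun j => ?_, fun i j _ _ => ?_⟩ <;> simp
  smul_mem' := by
    rintro c a ⟨h1, h2, h3⟩
    refine ⟨fun i i' => ?_, fun j => ?_, fun i j hh1 hh2 => ?_⟩ <;>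
      simp only [Matrix.smul_apply, smul_eq_mul, ← Finset.mul_sum]
    · rw [h1 i i']
    · rw [h2 j]
    · rw [h3 i j hh1 hh2, mul_zero]

lemma phi_ker (n m t : ℕ) (z : Fin n) (hz : (z : ℕ) = 0)
    (M : Matrix (Fin n) (Fin n) ℝ) (hW : M ∈ Wsub n m t z)
    (hphi : phiMap n m t z M = 0) : M = 0 := by
  obtain ⟨hrow, hcol, hzero⟩ := hW
  have hphi' : ∀ o, phiMap n m t z M o = 0 := fun o => congrFun hphi o
  have hs : ∑ j, M z j = 0 := hphi' none
  have hrow0 : ∀ i, ∑ j, M i j = 0 := fun i => (hrow i z).trans hs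
  have hcol0 : ∀ j, ∑ i, M i j = 0 := fun j => (hcol j).trans hs
  have hblock : ∀ i j : Fin n, (i : ℕ) ≠ 0 → (j : ℕ) ≠ 0 → M i j = 0 := by
    intro i j hi hj
    by_cases hgood : goodP n m t (i, j)
    · exact hphi' (some ⟨(i, j), hgood⟩)
    · have hZ : n ≤ (i : ℕ) + t ∧ m ≤ (j : ℕ) := by
        by_contra hc
        exact hgood ⟨hi, hj, hc⟩
      exact hzero i j hZ.1 hZ.2
  have hcolz : ∀ i : Fin n, (i : ℕ) ≠ 0 → M i z = 0 := by
    intro i hi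
    have h0 := hrow0 i
    rw [← Finset.add_sum_erase _ _ (Finset.mem_univ z)] at h0
    have hrest : ∀ j ∈ Finset.univ.erase z, M i j = 0 := by
      intro j hj
      refine hblock i j hi (fun h => Finset.ne_of_mem_erase hj (Fin.ext ?_))
      rw [h, hz]
    rw [Finset.sum_eq_zero hrest, add_zero] at h0
    exact h0
  have hrowz : ∀ j : Fin n, M z j = 0 := by
    intro j
    have h0 := hcol0 j
    rw [← Finset.add_sum_erase _ _ (Finset.mem_univ z)] at h0
    have hrest : ∀ i ∈ Finset.univ.erase z, M i j = 0 := by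
      intro i hi'
      have hine : (i : ℕ) ≠ 0 := fun h => Finset.ne_of_mem_erase hi' (Fin.ext (by rw [h, hz]))
      by_cases hj0 : (j : ℕ) = 0
      · have : j = z := Fin.ext (by rw [hj0, hz])
        rw [this]
        exact hcolz i hine
      · exact hblock i j hine hj0
    rw [Finset.sum_eq_zero hrest, add_zero] at h0
    exact h0
  funext i j
  show M i j = 0
  by_cases hi0 : (i : ℕ) = 0
  · have : i = z := Fin.ext (by rw [hi0, hz])
    rw [this]
    exact hrowz j
  · by_cases hj0 : (j : ℕ) = 0
    · have : j = z := Fin.ext (by rw [hj0, hz])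
      rw [this]
      exact hcolz i hi0
    · exact hblock i j hi0 hj0

lemma cardFilterFin2 (n : ℕ) (P : ℕ → Prop) [DecidablePred P] (a b : ℕ)
    (h : ∀ x, x < n → (P x ↔ a ≤ x ∧ x < b)) (hb : b ≤ n) :
    (Finset.univ.filter fun i : Fin n => P (i : ℕ)).card = b - a := by
  rw [Finset.card_filter, Fin.sum_univ_eq_sum_range (fun i => if P i then 1 else 0),
    ← Finset.card_filter]
  rw [show (Finset.range n).filter P = Finset.Ico a b by
    ext x; simp only [Finset.mem_filter, Finset.mem_range, Finset.mem_Ico]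
    constructor
    · rintro ⟨hx, hp⟩; exact (h x hx).1 hp
    · rintro ⟨ha, hx⟩; exact ⟨by omega, (h x (by omega)).2 ⟨ha, hx⟩⟩]
  exact Nat.card_Ico a b

lemma prodFilterCard (n : ℕ) (P Q : ℕ → Prop) [DecidablePred P] [DecidablePred Q] :
    (Finset.univ.filter fun p : Fin n × Fin n => P (p.1 : ℕ) ∧ Q (p.2 : ℕ)).card =
    (Finset.univ.filter fun i : Fin n => P (i : ℕ)).card *
    (Finset.univ.filter fun j : Fin n => Q (j : ℕ)).card := by
  rw [← Finset.card_product]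
  congr 1
  ext p
  simp [Finset.mem_filter, Finset.mem_product]

lemma goodCard (n m t : ℕ) (hm1 : 1 ≤ m) (hmn : m ≤ n) (ht : t + 1 ≤ m) :
    (Finset.univ.filter (goodP n m t)).card + t * (n - m) ≤ (n - 1) ^ 2 := by
  classical
  have hsplit := Finset.card_filter_add_card_filter_not
    (s := Finset.univ.filter fun p : Fin n × Fin n => (p.1 : ℕ) ≠ 0 ∧ (p.2 : ℕ) ≠ 0)
    (p := fun p : Fin n × Fin n => n ≤ (p.1 : ℕ) + t ∧ m ≤ (p.2 : ℕ))
  have hgood_eq : ((Finset.univ.filter fun p : Fin n × Fin n =>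
      (p.1 : ℕ) ≠ 0 ∧ (p.2 : ℕ) ≠ 0).filter
      fun p => ¬ (n ≤ (p.1 : ℕ) + t ∧ m ≤ (p.2 : ℕ))) =
      Finset.univ.filter (goodP n m t) := by
    rw [Finset.filter_filter]
    apply Finset.filter_congr
    intro p _
    unfold goodP
    tauto
  have hZ_eq : ((Finset.univ.filter fun p : Fin n × Fin n =>
      (p.1 : ℕ) ≠ 0 ∧ (p.2 : ℕ) ≠ 0).filter
      fun p => n ≤ (p.1 : ℕ) + t ∧ m ≤ (p.2 : ℕ)) =
      (Finset.univ.filter fun p : Fin n × Fin n =>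
        n ≤ (p.1 : ℕ) + t ∧ m ≤ (p.2 : ℕ)) := by
    rw [Finset.filter_filter]
    apply Finset.filter_congr
    intro p _
    have h1 := p.1.isLt
    have h2 := p.2.isLt
    constructor
    · tauto
    · intro h
      exact ⟨⟨by omega, by omega⟩, h⟩
  have hA : (Finset.univ.filter fun i : Fin n => n ≤ (i : ℕ) + t).card = t := by
    have h := cardFilterFin2 n (fun x => n ≤ x + t) (n - t) n (fun x hx => by omega) le_rfl
    rw [h]; omega
  have hB : (Finset.univ.filter fun j : Fin n => m ≤ (j : ℕ)).card = n - m := by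
    have h := cardFilterFin2 n (fun x => m ≤ x) m n (fun x hx => by omega) le_rfl
    rw [h]
  have hC : (Finset.univ.filter fun i : Fin n => (i : ℕ) ≠ 0).card = n - 1 := by
    have h := cardFilterFin2 n (fun x => x ≠ 0) 1 n (fun x hx => by omega) le_rfl
    rw [h]
  have hZcard : (Finset.univ.filter fun p : Fin n × Fin n =>
      n ≤ (p.1 : ℕ) + t ∧ m ≤ (p.2 : ℕ)).card = t * (n - m) := by
    rw [prodFilterCard n (fun x => n ≤ x + t) (fun x => m ≤ x), hA, hB]
  have hScard : (Finset.univ.filter fun p : Fin n × Fin n =>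
      (p.1 : ℕ) ≠ 0 ∧ (p.2 : ℕ) ≠ 0).card = (n - 1) * (n - 1) := by
    rw [prodFilterCard n (fun x => x ≠ 0) (fun x => x ≠ 0), hC]
  rw [hgood_eq, hZ_eq, hZcard, hScard] at hsplit
  rw [pow_two]
  omega

/-- any `ℝ`-linearly independent family of permutation matrices
of `123`-avoiding permutations each meeting `B_n(m,t)` exactly once has size
at most `(n-1)² + 1 - t(n-m)`. -/
theorem flagBlocker_dim_upper_bound (n m t : ℕ) (hm1 : 1 ≤ m) (hmn : m ≤ n)
    (ht : t + 1 ≤ m) (N : ℕ) (σ : Fin N → Equiv.Perm (Fin n))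
    (havoid : ∀ a, Avoids123 (σ a))
    (honce : ∀ a, ∃! i : Fin n, (i, σ a i) ∈ FlagBlocker n m t)
    (hli : LinearIndependent ℝ fun a => permMatrix n (σ a)) :
    N + t * (n - m) ≤ (n - 1) ^ 2 + 1 := by
  classical
  have hn : 0 < n := lt_of_lt_of_le hm1 hmn
  set z : Fin n := ⟨0, hn⟩ with hzdef
  have hmem : ∀ a, permMatrix n (σ a) ∈ Wsub n m t z := by
    intro a
    have hrs : ∀ i : Fin n, ∑ j, permMatrix n (σ a) i j = 1 := by
      intro i
      simp [permMatrix, Finset.sum_ite_eq]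
    have hcs : ∀ j : Fin n, ∑ i, permMatrix n (σ a) i j = 1 := by
      intro j
      have hcong : ∀ i : Fin n, permMatrix n (σ a) i j
          = if i = (σ a).symm j then 1 else 0 := by
        intro i
        unfold permMatrix
        simp only [Equiv.eq_symm_apply]
      rw [Finset.sum_congr rfl (fun i _ => hcong i)]
      simp [Finset.sum_ite_eq']
    refine ⟨fun i i' => by rw [hrs i, hrs i'], fun j => by rw [hcs j, hrs z], ?_⟩
    intro i j hi hj
    show (if σ a i = j then (1 : ℝ) else 0) = 0
    rw [if_neg]
    intro heq
    have hv : m ≤ (σ a i : ℕ) := by rw [heq]; exact hj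
    obtain ⟨i₁, i₂, hne, h1, h2⟩ := two_hits n m t hm1 hmn ht (σ a) (havoid a) i hi hv
    obtain ⟨c, -, hcuniq⟩ := honce a
    exact hne ((hcuniq i₁ h1).trans (hcuniq i₂ h2).symm)
  have hspan : Submodule.span ℝ (Set.range fun a => permMatrix n (σ a)) ≤ Wsub n m t z := by
    rw [Submodule.span_le]
    rintro _ ⟨a, rfl⟩
    exact hmem a
  have hdisj : Disjoint (Submodule.span ℝ (Set.range fun a => permMatrix n (σ a)))
      (LinearMap.ker (phiMap n m t z)) := by
    rw [Submodule.disjoint_def]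
    intro M hMs hMk
    exact phi_ker n m t z rfl M (hspan hMs) (LinearMap.mem_ker.mp hMk)
  have hli2 := hli.map hdisj
  have hcard := hli2.fintype_card_le_finrank
  rw [Module.finrank_fintype_fun_eq_card, Fintype.card_fin, Fintype.card_option,
    Fintype.card_subtype] at hcard
  have heta : (Finset.univ.filter fun x => goodP n m t x)
      = Finset.univ.filter (goodP n m t) := rfl
  rw [heta] at hcard
  have hgc := goodCard n m t hm1 hmn ht
  omega
end

section
/- Let n ≥ 1 and let B be the blocker consisting of all n positions of a single row (B = {(r, j) : 1 ≤ j ≤ n} for some fixed r) or of a single column (B = {(i, c) : 1 ≤ i ≤ n} for some fixed c) of an n×n matrix. Then there exist (n−1)² + 1 permutation matrices of 123-avoiding permutations of {1,…,n} that are linearly independent over ℝ and each of which intersects B exactly once. -/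
def rho (n : ℕ) (i j : Fin n) : Equiv.Perm (Fin n) :=
  (Fin.cycleRange i).trans ((Fin.cycleRange j.rev).symm.trans Fin.revPerm)

lemma rho_apply_self (n : ℕ) (i j : Fin n) : rho n i j i = j := by
  obtain ⟨m, rfl⟩ : ∃ m, n = m + 1 := ⟨n - 1, (Nat.succ_pred_eq_of_pos i.pos).symm⟩
  have h0 : (Fin.cycleRange j.rev).symm 0 = j.rev := by
    rw [Equiv.symm_apply_eq, Fin.cycleRange_self]
  simp [rho, Fin.cycleRange_self, h0]

lemma rho_apply_of_lt (n : ℕ) (i j : Fin n) {k : Fin n} (h : k < i) :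
    ((rho n i j k : ℕ) = if (j : ℕ) + k + 2 ≤ n then n - 1 - k else n - 2 - k) := by
  obtain ⟨m, rfl⟩ : ∃ m, n = m + 1 := ⟨n - 1, (Nat.succ_pred_eq_of_pos i.pos).symm⟩
  set t := (Fin.cycleRange j.rev).symm (Fin.cycleRange i k) with ht
  have htv : Fin.cycleRange j.rev t = Fin.cycleRange i k := Equiv.apply_symm_apply _ _
  have hck : (Fin.cycleRange i k : ℕ) = (k : ℕ) + 1 := Fin.coe_cycleRange_of_lt h
  have hrho : (rho (m+1) i j k : ℕ) = m - (t : ℕ) := by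
    simp [rho, ← ht, Fin.val_rev]
  have hjr : (j.rev : ℕ) = m - (j : ℕ) := by simp [Fin.val_rev]
  rcases lt_trichotomy t j.rev with hc | hc | hc
  · have := Fin.coe_cycleRange_of_lt hc
    rw [htv, hck] at this
    have htk : (t : ℕ) = (k : ℕ) := by omega
    have hcond : (j : ℕ) + k + 2 ≤ m + 1 := by
      have := hc
      rw [Fin.lt_iff_val_lt_val, hjr, htk] at this
      have hj := j.isLt
      omega
    rw [hrho, htk, if_pos hcond]; omega
  · rw [hc, Fin.cycleRange_self] at htv
    have : (Fin.cycleRange i k : ℕ) = 0 := by rw [← htv]; rfl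
    omega
  · have := Fin.cycleRange_of_gt hc
    rw [htv] at this
    have htk : (t : ℕ) = (k : ℕ) + 1 := by
      rw [← this, hck]
    have hcond : ¬ ((j : ℕ) + k + 2 ≤ m + 1) := by
      rw [Fin.lt_iff_val_lt_val, hjr, htk] at hc
      have hj := j.isLt
      omega
    rw [hrho, htk, if_neg hcond]; omega

lemma rho_apply_of_gt (n : ℕ) (i j : Fin n) {k : Fin n} (h : i < k) :
    ((rho n i j k : ℕ) = if (j : ℕ) + k + 1 ≤ n then n - k else n - 1 - k) := by
  obtain ⟨m, rfl⟩ : ∃ m, n = m + 1 := ⟨n - 1, (Nat.succ_pred_eq_of_pos i.pos).symm⟩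
  set t := (Fin.cycleRange j.rev).symm (Fin.cycleRange i k) with ht
  have htv : Fin.cycleRange j.rev t = Fin.cycleRange i k := Equiv.apply_symm_apply _ _
  have hck : (Fin.cycleRange i k : ℕ) = (k : ℕ) := by rw [Fin.cycleRange_of_gt h]
  have hk0 : 0 < (k : ℕ) := by
    have := Fin.lt_iff_val_lt_val.mp h; omega
  have hrho : (rho (m+1) i j k : ℕ) = m - (t : ℕ) := by
    simp [rho, ← ht, Fin.val_rev]
  have hjr : (j.rev : ℕ) = m - (j : ℕ) := by simp [Fin.val_rev]
  have hj := j.isLt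
  have hkm := k.isLt
  rcases lt_trichotomy t j.rev with hc | hc | hc
  · have := Fin.coe_cycleRange_of_lt hc
    rw [htv, hck] at this
    have htk : (t : ℕ) = (k : ℕ) - 1 := by omega
    have hcond : (j : ℕ) + k + 1 ≤ m + 1 := by
      rw [Fin.lt_iff_val_lt_val, hjr, htk] at hc
      omega
    rw [hrho, htk, if_pos hcond]; omega
  · rw [hc, Fin.cycleRange_self] at htv
    have : (Fin.cycleRange i k : ℕ) = 0 := by rw [← htv]; rfl
    omega
  · have := Fin.cycleRange_of_gt hc
    rw [htv] at this
    have htk : (t : ℕ) = (k : ℕ) := by rw [← this, hck]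
    have hcond : ¬ ((j : ℕ) + k + 1 ≤ m + 1) := by
      rw [Fin.lt_iff_val_lt_val, hjr, htk] at hc
      omega
    rw [hrho, htk, if_neg hcond]; omega

/-- Off the special position `i`, `rho` is strictly decreasing. -/
lemma rho_strictAnti (n : ℕ) (i j : Fin n) {k l : Fin n}
    (hk : k ≠ i) (hl : l ≠ i) (hkl : k < l) : rho n i j l < rho n i j k := by
  have hj := j.isLt
  have hkn := k.isLt
  have hln := l.isLt
  have hklv := Fin.lt_iff_val_lt_val.mp hkl
  rw [Fin.lt_iff_val_lt_val]
  rcases lt_or_gt_of_ne hk with hki | hki <;>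
    rcases lt_or_gt_of_ne hl with hli | hli
  · have h1 := rho_apply_of_lt n i j hki
    have h2 := rho_apply_of_lt n i j hli
    have := Fin.lt_iff_val_lt_val.mp hki
    have := Fin.lt_iff_val_lt_val.mp hli
    split_ifs at h1 h2 <;> omega
  · have h1 := rho_apply_of_lt n i j hki
    have h2 := rho_apply_of_gt n i j hli
    have := Fin.lt_iff_val_lt_val.mp hki
    have := Fin.lt_iff_val_lt_val.mp hli
    split_ifs at h1 h2 <;> omega
  · exact absurd (hli.trans (hki.trans hkl)) (lt_irrefl _)
  · have h1 := rho_apply_of_gt n i j hki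
    have h2 := rho_apply_of_gt n i j hli
    have := Fin.lt_iff_val_lt_val.mp hki
    have := Fin.lt_iff_val_lt_val.mp hli
    split_ifs at h1 h2 <;> omega

lemma rho_avoids (n : ℕ) (i j : Fin n) : Avoids123 (rho n i j) := by
  intro x y z hxy hyz h1 h2
  by_cases hy : y = i
  · have hx : x ≠ i := hy ▸ ne_of_lt hxy
    have hz : z ≠ i := hy ▸ ne_of_gt hyz
    exact absurd (h1.trans h2) (not_lt.mpr (rho_strictAnti n i j hx hz (hxy.trans hyz)).le)
  · by_cases hx : x = i
    · have hz : z ≠ i := by rintro rfl; exact hy (lt_asymm hyz (hx ▸ hxy)).elim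
      exact absurd h2 (not_lt.mpr (rho_strictAnti n i j hy hz hyz).le)
    · exact absurd h1 (not_lt.mpr (rho_strictAnti n i j hx hy hxy).le)

/-- The whole family lies in a band of three antidiagonals, off the special
position. -/
lemma rho_band (n : ℕ) (i j k : Fin n) (h : k ≠ i) :
    n ≤ (rho n i j k : ℕ) + (k : ℕ) + 2 ∧ (rho n i j k : ℕ) + (k : ℕ) ≤ n := by
  have hj := j.isLt
  have hi := i.isLt
  have hk := k.isLt
  rcases lt_or_gt_of_ne h with hki | hki
  · have h1 := rho_apply_of_lt n i j hki
    have := Fin.lt_iff_val_lt_val.mp hki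
    split_ifs at h1 <;> omega
  · have h1 := rho_apply_of_gt n i j hki
    have := Fin.lt_iff_val_lt_val.mp hki
    split_ifs at h1 <;> omega

def gg (n : ℕ) (p : Fin (n-1) × Fin (n-1)) : Fin n × Fin n :=
  if (p.1 : ℕ) + (p.2 : ℕ) + 2 ≤ n
  then (⟨p.1, by have := p.1.isLt; omega⟩, ⟨p.2, by have := p.2.isLt; omega⟩)
  else (⟨(p.1:ℕ)+1, by have := p.1.isLt; omega⟩, ⟨(p.2:ℕ)+1, by have := p.2.isLt; omega⟩)

lemma gg_spec (n : ℕ) (p : Fin (n-1) × Fin (n-1)) :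
    (((gg n p).1 : ℕ) = p.1 ∧ ((gg n p).2 : ℕ) = p.2 ∧ (p.1:ℕ) + (p.2:ℕ) + 2 ≤ n) ∨
    (((gg n p).1 : ℕ) = (p.1:ℕ)+1 ∧ ((gg n p).2 : ℕ) = (p.2:ℕ)+1 ∧
      n + 1 ≤ ((gg n p).1 : ℕ) + ((gg n p).2 : ℕ)) := by
  unfold gg
  split_ifs with h
  · exact Or.inl ⟨rfl, rfl, h⟩
  · exact Or.inr ⟨rfl, rfl, by simp; omega⟩

lemma gg_inj (n : ℕ) {p q : Fin (n-1) × Fin (n-1)} (h : gg n p = gg n q) : p = q := by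
  have hp := gg_spec n p
  have hq := gg_spec n q
  have h1 : ((gg n p).1 : ℕ) = ((gg n q).1 : ℕ) := by rw [h]
  have h2 : ((gg n p).2 : ℕ) = ((gg n q).2 : ℕ) := by rw [h]
  have e1 : (p.1 : ℕ) = (q.1 : ℕ) := by rcases hp with ⟨a,b,c⟩|⟨a,b,c⟩ <;>
    rcases hq with ⟨a',b',c'⟩|⟨a',b',c'⟩ <;> omega
  have e2 : (p.2 : ℕ) = (q.2 : ℕ) := by rcases hp with ⟨a,b,c⟩|⟨a,b,c⟩ <;>
    rcases hq with ⟨a',b',c'⟩|⟨a',b',c'⟩ <;> omega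
  exact Prod.ext (Fin.ext e1) (Fin.ext e2)

def fam (n : ℕ) (hn : 1 ≤ n) : Option (Fin (n-1) × Fin (n-1)) → Equiv.Perm (Fin n) :=
  fun o => match o with
  | none => rho n ⟨0, hn⟩ (Fin.rev ⟨0, hn⟩)
  | some p => rho n (gg n p).1 (gg n p).2

lemma fam_avoids (n : ℕ) (hn : 1 ≤ n) : ∀ o, Avoids123 (fam n hn o) := by
  rintro (_ | p) <;> exact rho_avoids n _ _

/-- entries of `rho i' j'` vanish at positions off the band and off `(i',j')`. -/
lemma entry_zero_of_far (n : ℕ) (i' j' i j : Fin n)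
    (hfar : (i:ℕ) + (j:ℕ) + 2 < n ∨ n + 1 ≤ (i:ℕ) + (j:ℕ))
    (hne : (i', j') ≠ (i, j)) : rho n i' j' i ≠ j := by
  by_cases hii : i' = i
  · subst hii
    have : j' ≠ j := by rintro rfl; exact hne rfl
    rw [rho_apply_self]; exact this
  · intro hcon
    have hb := rho_band n i' j' i (Ne.symm hii)
    rw [hcon] at hb
    omega

lemma fam_li (n : ℕ) (hn : 1 ≤ n) :
    LinearIndependent ℝ (fun o => permMatrix n (fam n hn o)) := by
  rw [Fintype.linearIndependent_iff]
  intro c hc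
  set i0 : Fin n := ⟨0, hn⟩ with hi0
  have hrev : ((Fin.rev i0 : Fin n) : ℕ) = n - 1 := by
    rw [Fin.val_rev]
  have key : ∀ i j : Fin n, ∑ o, (if fam n hn o i = j then c o else 0) = 0 := by
    intro i j
    have h := congrFun (congrFun hc i) j
    simpa [Matrix.sum_apply, permMatrix, mul_ite] using h
  have hA : ∀ p, ((gg n p).1:ℕ) + ((gg n p).2:ℕ) + 2 ≠ n → c (some p) = 0 := by
    intro p hp
    set i := (gg n p).1 with hi
    set j := (gg n p).2 with hj
    have hfar : (i:ℕ) + (j:ℕ) + 2 < n ∨ n + 1 ≤ (i:ℕ) + (j:ℕ) := by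
      rcases gg_spec n p with ⟨a,b,hc2⟩|⟨a,b,hc2⟩ <;> omega
    have h := key i j
    rw [Finset.sum_eq_single (some p)] at h
    · simpa [fam, hi, hj, rho_apply_self] using h
    · intro b _ hb
      rcases b with _ | q
      · have hpair : (i0, Fin.rev i0) ≠ (i, j) := by
          intro heq
          rw [Prod.mk.injEq] at heq
          obtain ⟨h1, h2⟩ := heq
          have e1 : (i:ℕ) = 0 := by rw [← h1]
          have e2 : (j:ℕ) = n - 1 := by rw [← h2, hrev]
          omega
        have hz : fam n hn none i ≠ j :=
          entry_zero_of_far n i0 (Fin.rev i0) i j hfar hpair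
        rw [if_neg hz]
      · have hpair : ((gg n q).1, (gg n q).2) ≠ (i, j) := by
          intro heq
          rw [Prod.mk.injEq] at heq
          exact hb (congrArg some (gg_inj n (Prod.ext heq.1 heq.2)))
        have hz : fam n hn (some q) i ≠ j :=
          entry_zero_of_far n (gg n q).1 (gg n q).2 i j hfar hpair
        rw [if_neg hz]
    · intro h; exact absurd (Finset.mem_univ _) h
  have hB : ∀ p, c (some p) = 0 := by
    intro p
    by_cases hp : ((gg n p).1:ℕ) + ((gg n p).2:ℕ) + 2 = n
    · set i := (gg n p).1 with hi
      set j := (gg n p).2 with hj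
      have hin := i.isLt
      have hjn := j.isLt
      have h := key i j
      rw [Finset.sum_eq_single (some p)] at h
      · simpa [fam, hi, hj, rho_apply_self] using h
      · intro b _ hb
        rcases b with _ | q
        · have hz : fam n hn none i ≠ j := by
            intro hcon
            by_cases hii : i = i0
            · have hcon' : rho n i0 (Fin.rev i0) i = j := hcon
              rw [hii, rho_apply_self] at hcon'
              have e1 : (i:ℕ) = 0 := by rw [hii]
              have e2 : (j:ℕ) = n - 1 := by rw [← hcon', hrev]
              omega
            · have hgt : i0 < i := by
                rw [Fin.lt_iff_val_lt_val]
                exact Nat.pos_of_ne_zero (fun h0 => hii (Fin.ext h0))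
              have hv := rho_apply_of_gt n i0 (Fin.rev i0) hgt
              have hcv : (rho n i0 (Fin.rev i0) i : ℕ) = (j:ℕ) := by
                rw [show rho n i0 (Fin.rev i0) i = j from hcon]
              have e1 : (i:ℕ) ≠ 0 := fun h0 => hii (Fin.ext h0)
              rw [hrev] at hv
              split_ifs at hv <;> omega
          rw [if_neg hz]
        · by_cases hq : ((gg n q).1:ℕ) + ((gg n q).2:ℕ) + 2 = n
          · have hz : fam n hn (some q) i ≠ j := by
              intro hcon
              set i' := (gg n q).1 with hi'
              set j' := (gg n q).2 with hj'
              have hi'n := i'.isLt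
              have hii : i' ≠ i := by
                intro he
                apply hb
                have hjv : (j':ℕ) = (j:ℕ) := by
                  have := congrArg Fin.val he
                  omega
                exact congrArg some (gg_inj n (Prod.ext he (Fin.ext hjv)))
              have hcv : (rho n i' j' i : ℕ) = (j:ℕ) := by
                rw [show rho n i' j' i = j from hcon]
              rcases lt_or_gt_of_ne hii with hlt | hgt
              · have hv := rho_apply_of_gt n i' j' hlt
                have := Fin.lt_iff_val_lt_val.mp hlt
                split_ifs at hv <;> omega
              · have hv := rho_apply_of_lt n i' j' hgt
                have := Fin.lt_iff_val_lt_val.mp hgt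
                split_ifs at hv <;> omega
            rw [if_neg hz]
          · rw [hA q hq, ite_self]
      · intro h; exact absurd (Finset.mem_univ _) h
    · exact hA p hp
  have hC : c none = 0 := by
    have h := key i0 (Fin.rev i0)
    rw [Finset.sum_eq_single none] at h
    · simpa [fam, hi0, rho_apply_self] using h
    · intro b _ hb
      rcases b with _ | q
      · exact absurd rfl hb
      · rw [hB q, ite_self]
    · intro h; exact absurd (Finset.mem_univ _) h
  rintro (_ | p)
  exacts [hC, hB p]

/-- for the blocker consisting of a full row or a full column of
an `n × n` matrix, there exist `(n-1)² + 1` linearly independent permutation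
matrices of `123`-avoiding permutations, each meeting the blocker exactly
once. -/
theorem row_col_blocker_full_dim (n : ℕ) (hn : 1 ≤ n)
    (B : Set (Fin n × Fin n))
    (hB : (∃ r : Fin n, B = {p | p.1 = r}) ∨ (∃ c : Fin n, B = {p | p.2 = c})) :
    ∃ σ : Fin ((n - 1) ^ 2 + 1) → Equiv.Perm (Fin n),
      (∀ a, Avoids123 (σ a)) ∧
      (∀ a, ∃! i : Fin n, (i, σ a i) ∈ B) ∧
      LinearIndependent ℝ fun a => permMatrix n (σ a) := by
  classical
  have h2 : (n-1)^2 + 1 = (n-1)*(n-1) + 1 := by rw [sq]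
  let e : Fin ((n-1)^2+1) ≃ Option (Fin (n-1) × Fin (n-1)) :=
    (finCongr h2).trans ((finSuccEquiv ((n-1)*(n-1))).trans
      (Equiv.optionCongr finProdFinEquiv.symm))
  refine ⟨fun a => fam n hn (e a), fun a => fam_avoids n hn (e a), ?_, ?_⟩
  · intro a
    rcases hB with ⟨r, rfl⟩ | ⟨cc, rfl⟩
    · exact ⟨r, rfl, fun y hy => hy⟩
    · refine ⟨(fam n hn (e a)).symm cc, Equiv.apply_symm_apply _ _, fun y hy => ?_⟩
      have hy' : fam n hn (e a) y = cc := hy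
      rw [← hy', Equiv.symm_apply_apply]
  · have h := (linearIndependent_equiv e).mpr (fam_li n hn)
    exact h
end

section
/- Let n, m be integers with 1 ≤ m ≤ n, and consider the rectangular flag-shaped blocker B_n(m, m−1) (the case t = m−1). Then there exist (n−1)² + 1 − (m−1)(n−m) permutation matrices of 123-avoiding permutations of {1,…,n} that are linearly independent over ℝ and each of which intersects B_n(m, m−1) exactly once. (Together with the general upper bound, B_n(m, m−1) determines a face of the 123-avoiding polytope of exactly the maximum dimension (n−1)² + 1 − (m−1)(n−m).) -/
/-! ### Auxiliary construction

`gN n i j` is (the underlying function `ℕ → ℕ` of) the `123`-avoiding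
permutation obtained from the order-reversing permutation `k ↦ n-1-k` by
cyclically shifting the interval of rows between `i` and `n-1-j` so that a `1`
is placed at position `(i, j)`. -/

def gN (n i j k : ℕ) : ℕ :=
  if k = i then j
  else if i < k ∧ k + j < n then n - k
  else if k < i ∧ n ≤ k + j + 1 then n - 2 - k
  else n - 1 - k

lemma gN_lt (n i j k : ℕ) (hj : j < n) (hk : k < n) : gN n i j k < n := by
  unfold gN; split_ifs <;> omega

lemma gN_inv (n i j k : ℕ) (hi : i < n) (hj : j < n) (hk : k < n) :
    gN n j i (gN n i j k) = k := by
  unfold gN; split_ifs <;> omega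

lemma gN_avoid (n i j r s t : ℕ) (hrs : r < s) (hst : s < t) (ht : t < n) (hj : j < n)
    (h1 : gN n i j r < gN n i j s) (h2 : gN n i j s < gN n i j t) : False := by
  unfold gN at h1 h2; split_ifs at h1 h2 <;> omega

lemma gN_self (n i j : ℕ) : gN n i j i = j := by unfold gN; simp

lemma gN_unique (n m i j k : ℕ) (hm1 : 1 ≤ m) (hmn : m ≤ n) (hi : i < n) (hj : j < n)
    (hsum : i + j ≠ n) (hcond : n < i + m → j < m) (hk : k < n) :
    (k + m ≤ n ∧ gN n i j k < m) ↔
      k = (if i + m ≤ n ∧ j < m then i else if i + m = n ∧ m ≤ j then n - m - 1 else n - m) := by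
  unfold gN; split_ifs <;> omega

lemma gN_above (n i j i' j' : ℕ) (hi : i < n) (hsum : n + 1 ≤ i + j)
    (h : gN n i' j' i = j) : i' = i ∧ j' = j := by
  unfold gN at h; split_ifs at h <;> omega

lemma gN_below (n i j i' j' : ℕ) (hsum : i + j + 2 ≤ n)
    (h : gN n i' j' i = j) : (i' = i ∧ j' = j) ∨ n ≤ i' + j' := by
  unfold gN at h; split_ifs at h <;> omega

/-- The `123`-avoiding permutation with matrix entry at `(i,j)`. -/
def permOf (n i j : ℕ) (hi : i < n) (hj : j < n) : Equiv.Perm (Fin n) where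
  toFun k := ⟨gN n i j k, gN_lt n i j k hj k.isLt⟩
  invFun k := ⟨gN n j i k, gN_lt n j i k hi k.isLt⟩
  left_inv k := Fin.ext (gN_inv n i j k hi hj k.isLt)
  right_inv k := Fin.ext (gN_inv n j i k hj hi k.isLt)

lemma permOf_apply_mk (n i j : ℕ) (hi : i < n) (hj : j < n) (k : ℕ) (hk : k < n) :
    permOf n i j hi hj ⟨k, hk⟩ = ⟨gN n i j k, gN_lt n i j k hj hk⟩ := rfl

/-! ### The index set -/

def IdxP (n m : ℕ) (q : Fin (n-1) × Fin (n-1)) : Prop :=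
  n - m ≤ (q.1 : ℕ) ∧ m - 1 ≤ (q.2 : ℕ)

instance (n m : ℕ) : DecidablePred (IdxP n m) := fun q => by unfold IdxP; infer_instance

def Idx (n m : ℕ) : Type := {q : Fin (n-1) × Fin (n-1) // ¬ IdxP n m q} ⊕ Unit

instance (n m : ℕ) : Fintype (Idx n m) := inferInstanceAs (Fintype (_ ⊕ _))

def idxR (n m : ℕ) : Idx n m → ℕ
  | .inl q => if (q.1.1 : ℕ) + (q.1.2 : ℕ) + 2 ≤ n then (q.1.1 : ℕ) else (q.1.1 : ℕ) + 1
  | .inr _ => n - 1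

def idxC (n m : ℕ) : Idx n m → ℕ
  | .inl q => if (q.1.1 : ℕ) + (q.1.2 : ℕ) + 2 ≤ n then (q.1.2 : ℕ) else (q.1.2 : ℕ) + 1
  | .inr _ => 0

def lvl (n m : ℕ) : Idx n m → ℕ
  | .inl q => if (q.1.1 : ℕ) + (q.1.2 : ℕ) + 2 ≤ n then 1 else 0
  | .inr _ => 2

lemma idxR_lt (n m : ℕ) (hn : 1 ≤ n) (x : Idx n m) : idxR n m x < n := by
  rcases x with q | u
  · have h1 := q.1.1.isLt; have h2 := q.1.2.isLt
    simp only [idxR]; split_ifs <;> omega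
  · simp only [idxR]; omega

lemma idxC_lt (n m : ℕ) (hn : 1 ≤ n) (x : Idx n m) : idxC n m x < n := by
  rcases x with q | u
  · have h1 := q.1.1.isLt; have h2 := q.1.2.isLt
    simp only [idxC]; split_ifs <;> omega
  · simp only [idxC]; omega

lemma idx_cond (n m : ℕ) (hm1 : 1 ≤ m) (hmn : m ≤ n) (x : Idx n m) :
    n < idxR n m x + m → idxC n m x < m := by
  rcases x with q | u
  · have h1 := q.1.1.isLt; have h2 := q.1.2.isLt
    have hq := q.2; unfold IdxP at hq
    simp only [idxR, idxC]; split_ifs <;> omega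
  · simp only [idxR, idxC]; omega

lemma idx_sum_ne (n m : ℕ) (hn : 1 ≤ n) (x : Idx n m) :
    idxR n m x + idxC n m x ≠ n := by
  rcases x with q | u
  · have h1 := q.1.1.isLt; have h2 := q.1.2.isLt
    simp only [idxR, idxC]; split_ifs <;> omega
  · simp only [idxR, idxC]; omega

lemma idx_inj (n m : ℕ) (hn : 1 ≤ n) (x y : Idx n m)
    (hR : idxR n m x = idxR n m y) (hC : idxC n m x = idxC n m y) : x = y := by
  rcases x with q | u <;> rcases y with r | v
  · have h1 := q.1.1.isLt; have h2 := q.1.2.isLt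
    have h3 := r.1.1.isLt; have h4 := r.1.2.isLt
    simp only [idxR, idxC] at hR hC
    split_ifs at hR hC <;>
      exact congrArg Sum.inl (Subtype.ext (Prod.ext (Fin.ext (by omega)) (Fin.ext (by omega))))
  · have h1 := q.1.1.isLt; have h2 := q.1.2.isLt
    simp only [idxR, idxC] at hR hC; split_ifs at hR hC <;> omega
  · have h1 := r.1.1.isLt; have h2 := r.1.2.isLt
    simp only [idxR, idxC] at hR hC; split_ifs at hR hC <;> omega
  · rfl

lemma lvl_cases (n m : ℕ) (x : Idx n m) :
    lvl n m x = 0 ∨ lvl n m x = 1 ∨ lvl n m x = 2 := by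
  rcases x with q | u
  · simp only [lvl]; split_ifs <;> omega
  · right; right; rfl

lemma lvl0_sum (n m : ℕ) (x : Idx n m) (h : lvl n m x = 0) :
    n + 1 ≤ idxR n m x + idxC n m x := by
  rcases x with q | u
  · simp only [lvl, idxR, idxC] at h ⊢; split_ifs at h ⊢ <;> omega
  · exact absurd h (by simp [lvl])

lemma lvl_of_sum_ge (n m : ℕ) (hn : 1 ≤ n) (x : Idx n m)
    (h : n ≤ idxR n m x + idxC n m x) : lvl n m x = 0 := by
  rcases x with q | u
  · simp only [lvl, idxR, idxC] at h ⊢; split_ifs at h ⊢ <;> omega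
  · simp only [idxR, idxC] at h; omega

lemma lvl1_sum (n m : ℕ) (x : Idx n m) (h : lvl n m x = 1) :
    idxR n m x + idxC n m x + 2 ≤ n := by
  rcases x with q | u
  · simp only [lvl, idxR, idxC] at h ⊢; split_ifs at h ⊢ <;> omega
  · exact absurd h (by simp [lvl])

lemma lvl2_inr (n m : ℕ) (x : Idx n m) (h : lvl n m x = 2) : x = Sum.inr () := by
  rcases x with q | u
  · simp only [lvl] at h; split_ifs at h <;> omega
  · rfl

/-! ### Cardinality of the index set -/

def geEquiv (K c : ℕ) : {a : Fin K // c ≤ (a : ℕ)} ≃ Fin (K - c) where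
  toFun x := ⟨(x.1 : ℕ) - c, by have := x.1.isLt; have := x.2; omega⟩
  invFun b := ⟨⟨(b : ℕ) + c, by have := b.isLt; omega⟩, Nat.le_add_left c b⟩
  left_inv x := by
    apply Subtype.ext; apply Fin.ext
    show ((x.1 : ℕ) - c) + c = (x.1 : ℕ)
    have := x.2; omega
  right_inv b := by
    apply Fin.ext
    show ((b : ℕ) + c) - c = (b : ℕ)
    omega

lemma card_ge (K c : ℕ) : Fintype.card {a : Fin K // c ≤ (a : ℕ)} = K - c := by
  rw [Fintype.card_congr (geEquiv K c), Fintype.card_fin]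

lemma card_IdxP (n m : ℕ) :
    Fintype.card {q : Fin (n-1) × Fin (n-1) // IdxP n m q}
      = (n-1-(n-m)) * (n-1-(m-1)) := by
  have h2 : Fintype.card {q : Fin (n-1) × Fin (n-1) // IdxP n m q}
      = Fintype.card ({a : Fin (n-1) // n - m ≤ (a : ℕ)} × {b : Fin (n-1) // m - 1 ≤ (b : ℕ)}) :=
    Fintype.card_congr ((Equiv.subtypeEquivRight (fun q => Iff.rfl)).trans
      (Equiv.subtypeProdEquivProd (p := fun a : Fin (n-1) => n - m ≤ (a : ℕ))
        (q := fun b : Fin (n-1) => m - 1 ≤ (b : ℕ))))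
  rw [h2, Fintype.card_prod, card_ge, card_ge]

lemma card_Idx (n m : ℕ) (hm1 : 1 ≤ m) (hmn : m ≤ n) :
    Fintype.card (Idx n m) = (n-1)^2 + 1 - (m-1)*(n-m) := by
  have h : Fintype.card (Idx n m)
      = Fintype.card {q : Fin (n-1) × Fin (n-1) // ¬ IdxP n m q} + 1 := by
    rw [show Fintype.card (Idx n m)
        = Fintype.card ({q : Fin (n-1) × Fin (n-1) // ¬ IdxP n m q} ⊕ Unit) from rfl,
      Fintype.card_sum, Fintype.card_unit]
  rw [h, Fintype.card_subtype_compl, card_IdxP, Fintype.card_prod, Fintype.card_fin]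
  have e1 : n - 1 - (n - m) = m - 1 := by omega
  have e2 : n - 1 - (m - 1) = n - m := by omega
  rw [e1, e2, pow_two]
  have hF : (m-1) * (n-m) ≤ (n-1) * (n-1) :=
    Nat.mul_le_mul (by omega) (by omega)
  generalize (m-1) * (n-m) = F at *
  generalize (n-1) * (n-1) = B at *
  omega

/-! ### Linear independence of the family indexed by `Idx n m` -/

lemma indep (n m : ℕ) (hm1 : 1 ≤ m) (hmn : m ≤ n) :
    LinearIndependent ℝ (fun x : Idx n m =>
      permMatrix n (permOf n (idxR n m x) (idxC n m x)
        (idxR_lt n m (hm1.trans hmn) x) (idxC_lt n m (hm1.trans hmn) x))) := by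
  have hn : 1 ≤ n := hm1.trans hmn
  rw [Fintype.linearIndependent_iff]
  intro f hf
  have Ev : ∀ x : Idx n m,
      (∑ y : Idx n m, f y *
        (if gN n (idxR n m y) (idxC n m y) (idxR n m x) = idxC n m x then (1:ℝ) else 0)) = 0 := by
    intro x
    have h0 := congrFun (congrFun hf ⟨idxR n m x, idxR_lt n m hn x⟩)
      ⟨idxC n m x, idxC_lt n m hn x⟩
    simp only [Matrix.sum_apply, Matrix.smul_apply, smul_eq_mul, Matrix.zero_apply,
      permMatrix, permOf_apply_mk, Fin.mk.injEq] at h0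
    exact h0
  have pass0 : ∀ x : Idx n m, lvl n m x = 0 → f x = 0 := by
    intro x hx
    have h := Ev x
    rw [Finset.sum_eq_single x
      (fun y _ hyx => by
        by_cases hit : gN n (idxR n m y) (idxC n m y) (idxR n m x) = idxC n m x
        · exact absurd
            (idx_inj n m hn y x
              (gN_above n (idxR n m x) (idxC n m x) _ _ (idxR_lt n m hn x)
                (lvl0_sum n m x hx) hit).1
              (gN_above n (idxR n m x) (idxC n m x) _ _ (idxR_lt n m hn x)
                (lvl0_sum n m x hx) hit).2) hyx
        · rw [if_neg hit, mul_zero])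
      (fun hx' => absurd (Finset.mem_univ x) hx')] at h
    rw [if_pos (gN_self n (idxR n m x) (idxC n m x)), mul_one] at h
    exact h
  have pass1 : ∀ x : Idx n m, lvl n m x = 1 → f x = 0 := by
    intro x hx
    have h := Ev x
    rw [Finset.sum_eq_single x
      (fun y _ hyx => by
        by_cases hit : gN n (idxR n m y) (idxC n m y) (idxR n m x) = idxC n m x
        · rcases gN_below n (idxR n m x) (idxC n m x) _ _ (lvl1_sum n m x hx) hit with
            ⟨h1, h2⟩ | hge
          · exact absurd (idx_inj n m hn y x h1 h2) hyx
          · rw [pass0 y (lvl_of_sum_ge n m hn y hge), zero_mul]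
        · rw [if_neg hit, mul_zero])
      (fun hx' => absurd (Finset.mem_univ x) hx')] at h
    rw [if_pos (gN_self n (idxR n m x) (idxC n m x)), mul_one] at h
    exact h
  have pass2 : ∀ x : Idx n m, lvl n m x = 2 → f x = 0 := by
    intro x hx
    have h := Ev x
    rw [Finset.sum_eq_single x
      (fun y _ hyx => by
        rcases lvl_cases n m y with hy | hy | hy
        · rw [pass0 y hy, zero_mul]
        · rw [pass1 y hy, zero_mul]
        · exact absurd ((lvl2_inr n m y hy).trans (lvl2_inr n m x hx).symm) hyx)
      (fun hx' => absurd (Finset.mem_univ x) hx')] at h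
    rw [if_pos (gN_self n (idxR n m x) (idxC n m x)), mul_one] at h
    exact h
  intro x
  rcases lvl_cases n m x with hx | hx | hx
  · exact pass0 x hx
  · exact pass1 x hx
  · exact pass2 x hx

lemma flag_mem (n m : ℕ) (hm1 : 1 ≤ m) (r c : Fin n) :
    ((r, c) ∈ FlagBlocker n m (m-1)) ↔ ((r : ℕ) + m ≤ n ∧ (c : ℕ) < m) := by
  simp only [FlagBlocker, Set.mem_setOf_eq]; omega

/-- the rectangular flag-shaped blocker `B_n(m, m-1)` admits
`(n-1)² + 1 - (m-1)(n-m)` linearly independent permutation matrices of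
`123`-avoiding permutations, each meeting it exactly once. -/
theorem rectangular_flagBlocker_max_dim (n m : ℕ) (hm1 : 1 ≤ m) (hmn : m ≤ n) :
    ∃ σ : Fin ((n - 1) ^ 2 + 1 - (m - 1) * (n - m)) → Equiv.Perm (Fin n),
      (∀ a, Avoids123 (σ a)) ∧
      (∀ a, ∃! i : Fin n, (i, σ a i) ∈ FlagBlocker n m (m - 1)) ∧
      LinearIndependent ℝ fun a => permMatrix n (σ a) := by
  have hn : 1 ≤ n := hm1.trans hmn
  have hcard := card_Idx n m hm1 hmn
  let e : Fin ((n - 1) ^ 2 + 1 - (m - 1) * (n - m)) ≃ Idx n m :=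
    (Fintype.equivFinOfCardEq hcard).symm
  refine ⟨fun a => permOf n (idxR n m (e a)) (idxC n m (e a))
      (idxR_lt n m hn (e a)) (idxC_lt n m hn (e a)), fun a => ?_, fun a => ?_, ?_⟩
  · -- 123-avoiding
    intro r s t hrs hst h1 h2
    exact gN_avoid n (idxR n m (e a)) (idxC n m (e a)) r s t
      (Fin.lt_def.mp hrs) (Fin.lt_def.mp hst) t.isLt (idxC_lt n m hn (e a))
      (Fin.lt_def.mp h1) (Fin.lt_def.mp h2)
  · -- meets the blocker exactly once
    have hi := idxR_lt n m hn (e a)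
    have hj := idxC_lt n m hn (e a)
    have hsum := idx_sum_ne n m hn (e a)
    have hcond := idx_cond n m hm1 hmn (e a)
    set i := idxR n m (e a) with hidef
    set j := idxC n m (e a) with hjdef
    set r0 : ℕ := if i + m ≤ n ∧ j < m then i else if i + m = n ∧ m ≤ j then n - m - 1 else n - m
      with hr0
    have hr0n : r0 < n := by rw [hr0]; split_ifs <;> omega
    refine ⟨⟨r0, hr0n⟩, ?_, ?_⟩
    · simp only [flag_mem n m hm1]
      exact (gN_unique n m i j r0 hm1 hmn hi hj hsum hcond hr0n).mpr hr0
    · intro y hy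
      simp only [flag_mem n m hm1] at hy
      exact Fin.ext ((gN_unique n m i j (y : ℕ) hm1 hmn hi hj hsum hcond y.isLt).mp hy)
  · -- linear independence
    exact (indep n m hm1 hmn).comp e e.injective
end

section
/- Let n ≥ 1 and let r, s be positive integers with r + s = n + 1, and let L_n(s,r) = {(1, j) : n − s + 1 ≤ j ≤ n} ∪ {(i, n) : 1 ≤ i ≤ r} be the L-shaped blocker (a set of n positions). Then there exist (n−1)² permutation matrices of 123-avoiding permutations of {1,…,n} that are linearly independent over ℝ and each of which intersects L_n(s,r) exactly once. -/
def pi1Fun (n b : ℕ) (h : b + 2 ≤ n) : Fin n → Fin n := fun i =>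
  ⟨if i.1 ≤ b then b - i.1 else n + b - i.1, by have := i.isLt; split_ifs <;> omega⟩

def pi1 (n b : ℕ) (h : b + 2 ≤ n) : Equiv.Perm (Fin n) :=
  Function.Involutive.toPerm (pi1Fun n b h)
    (by
      intro i
      have := i.isLt
      ext
      simp only [pi1Fun]
      split_ifs <;> omega)

@[simp] lemma pi1_val (n b : ℕ) (h : b + 2 ≤ n) (i : Fin n) :
    ((pi1 n b h) i).1 = if i.1 ≤ b then b - i.1 else n + b - i.1 := rfl

def pi2Fun (n b : ℕ) (h1 : 1 ≤ b) (h2 : b + 2 ≤ n) : Fin n → Fin n := fun i =>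
  ⟨if i.1 < b then b - i.1 else if i.1 = n - 1 then 0 else n + b - 1 - i.1,
    by have := i.isLt; split_ifs <;> omega⟩

noncomputable def pi2 (n b : ℕ) (h1 : 1 ≤ b) (h2 : b + 2 ≤ n) : Equiv.Perm (Fin n) :=
  Equiv.ofBijective (pi2Fun n b h1 h2)
    (Finite.injective_iff_bijective.mp (by
      intro i j hij
      have hi := i.isLt; have hj := j.isLt
      have h' : (pi2Fun n b h1 h2 i).1 = (pi2Fun n b h1 h2 j).1 := congrArg Fin.val hij
      simp only [pi2Fun] at h'
      ext
      split_ifs at h' <;> omega))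

@[simp] lemma pi2_val (n b : ℕ) (h1 : 1 ≤ b) (h2 : b + 2 ≤ n) (i : Fin n) :
    ((pi2 n b h1 h2) i).1
      = if i.1 < b then b - i.1 else if i.1 = n - 1 then 0 else n + b - 1 - i.1 := rfl

def liftFun (m : ℕ) (τ : Equiv.Perm (Fin m)) : Fin (m + 1) → Fin (m + 1) := fun i =>
  if h : i.1 = 0 then ⟨m, by omega⟩
  else ⟨(τ ⟨i.1 - 1, by have := i.isLt; omega⟩).1,
    by have := (τ ⟨i.1 - 1, by have := i.isLt; omega⟩).isLt; omega⟩

noncomputable def liftP (m : ℕ) (τ : Equiv.Perm (Fin m)) : Equiv.Perm (Fin (m + 1)) :=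
  Equiv.ofBijective (liftFun m τ)
    (Finite.injective_iff_bijective.mp (by
      intro i j hij
      unfold liftFun at hij
      by_cases hi : i.1 = 0 <;> by_cases hj : j.1 = 0
      · ext; omega
      · rw [dif_pos hi, dif_neg hj] at hij
        have h' := congrArg Fin.val hij
        simp only at h'
        have := (τ ⟨j.1 - 1, by have := j.isLt; omega⟩).isLt
        omega
      · rw [dif_neg hi, dif_pos hj] at hij
        have h' := congrArg Fin.val hij
        simp only at h'
        have := (τ ⟨i.1 - 1, by have := i.isLt; omega⟩).isLt
        omega
      · rw [dif_neg hi, dif_neg hj] at hij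
        have h' := congrArg Fin.val hij
        simp only at h'
        have h2 : τ ⟨i.1 - 1, by have := i.isLt; omega⟩ = τ ⟨j.1 - 1, by have := j.isLt; omega⟩ :=
          Fin.ext h'
        have h3 := congrArg Fin.val (τ.injective h2)
        simp only at h3
        ext
        omega))

lemma liftP_zero_val (m : ℕ) (τ : Equiv.Perm (Fin m)) (i : Fin (m + 1)) (hi : i.1 = 0) :
    ((liftP m τ) i).1 = m := by
  show ((liftFun m τ) i).1 = m
  simp [liftFun, hi]

lemma liftP_succ_val (m : ℕ) (τ : Equiv.Perm (Fin m)) (i : Fin (m + 1)) (hi : i.1 ≠ 0) :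
    ((liftP m τ) i).1 = (τ ⟨i.1 - 1, by have := i.isLt; omega⟩).1 := by
  show ((liftFun m τ) i).1 = _
  simp [liftFun, hi]

lemma pi1_avoids (n b : ℕ) (h : b + 2 ≤ n) : Avoids123 (pi1 n b h) := by
  intro i j k hij hjk h1 h2
  have hi := i.isLt; have hj := j.isLt; have hk := k.isLt
  rw [Fin.lt_def] at hij hjk h1 h2
  rw [pi1_val, pi1_val] at h1 h2
  split_ifs at h1 h2 <;> omega

lemma pi2_avoids (n b : ℕ) (h1 : 1 ≤ b) (h2 : b + 2 ≤ n) : Avoids123 (pi2 n b h1 h2) := by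
  intro i j k hij hjk ha hb
  have hi := i.isLt; have hj := j.isLt; have hk := k.isLt
  rw [Fin.lt_def] at hij hjk ha hb
  rw [pi2_val, pi2_val] at ha hb
  split_ifs at ha hb <;> omega

lemma liftP_val_lt (m : ℕ) (τ : Equiv.Perm (Fin m)) (i : Fin (m + 1)) (hi : i.1 ≠ 0) :
    ((liftP m τ) i).1 < m := by
  rw [liftP_succ_val m τ i hi]
  exact (τ _).isLt

lemma liftP_avoids (m : ℕ) (τ : Equiv.Perm (Fin m)) (hτ : Avoids123 τ) :
    Avoids123 (liftP m τ) := by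
  intro i j k hij hjk h1 h2
  rw [Fin.lt_def] at hij hjk h1 h2
  by_cases hi : i.1 = 0
  · rw [liftP_zero_val m τ i hi] at h1
    have := liftP_val_lt m τ j (by omega)
    omega
  · have hj : j.1 ≠ 0 := by omega
    have hk : k.1 ≠ 0 := by omega
    rw [liftP_succ_val m τ i hi, liftP_succ_val m τ j hj] at h1
    rw [liftP_succ_val m τ j hj, liftP_succ_val m τ k hk] at h2
    exact hτ ⟨i.1 - 1, by have := i.isLt; omega⟩ ⟨j.1 - 1, by have := j.isLt; omega⟩
      ⟨k.1 - 1, by have := k.isLt; omega⟩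
      (by rw [Fin.lt_def]; simp only; omega) (by rw [Fin.lt_def]; simp only; omega)
      (by rw [Fin.lt_def]; exact h1) (by rw [Fin.lt_def]; exact h2)

def Phi (m : ℕ) : Matrix (Fin (m + 1)) (Fin (m + 1)) ℝ →ₗ[ℝ] Matrix (Fin m) (Fin m) ℝ where
  toFun M := M.submatrix Fin.succ Fin.castSucc
  map_add' M N := by ext i j; simp [Matrix.submatrix]
  map_smul' c M := by ext i j; simp [Matrix.submatrix]

lemma lift_li {m : ℕ} {ι : Type} (F : ι → Equiv.Perm (Fin m))
    (h : LinearIndependent ℝ fun a => permMatrix m (F a)) :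
    LinearIndependent ℝ fun a => permMatrix (m + 1) (liftP m (F a)) := by
  apply LinearIndependent.of_comp (Phi m)
  convert h using 1
  funext a
  ext i j
  show permMatrix (m + 1) (liftP m (F a)) i.succ j.castSucc = permMatrix m (F a) i j
  have hv : ((liftP m (F a)) i.succ).1 = ((F a) i).1 := by
    rw [liftP_succ_val m (F a) i.succ (by simp [Fin.val_succ])]
    exact congrArg Fin.val (congrArg (F a) (Fin.ext (by simp)))
  have hiff : ((liftP m (F a)) i.succ = j.castSucc) ↔ ((F a) i = j) := by
    rw [Fin.ext_iff, Fin.ext_iff, hv, Fin.coe_castSucc]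
  simp only [permMatrix, hiff]

lemma pi1_zero (n b : ℕ) (h : b + 2 ≤ n) (i : Fin n) (hi : i.1 = 0) :
    ((pi1 n b h) i).1 = b := by
  rw [pi1_val, hi]
  simp

lemma pi1_last_iff (n b : ℕ) (h : b + 2 ≤ n) (i : Fin n) :
    ((pi1 n b h) i).1 = n - 1 ↔ i.1 = b + 1 := by
  have := i.isLt
  rw [pi1_val]
  split_ifs <;> omega

lemma pi2_zero (n b : ℕ) (h1 : 1 ≤ b) (h2 : b + 2 ≤ n) (i : Fin n) (hi : i.1 = 0) :
    ((pi2 n b h1 h2) i).1 = b := by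
  rw [pi2_val, hi]
  rw [if_pos (by omega)]
  omega

lemma pi2_last_iff (n b : ℕ) (h1 : 1 ≤ b) (h2 : b + 2 ≤ n) (i : Fin n) :
    ((pi2 n b h1 h2) i).1 = n - 1 ↔ i.1 = b := by
  have := i.isLt
  rw [pi2_val]
  split_ifs <;> omega

lemma sum_ite_subtype (B : Finset ℕ) (f : {x // x ∈ B} → ℝ) (P : {x // x ∈ B} → Prop)
    [DecidablePred P] (b : ℕ) (hP : ∀ x, P x ↔ x.1 = b) :
    ∑ x : {x // x ∈ B}, (if P x then f x else 0) = if h : b ∈ B then f ⟨b, h⟩ else 0 := by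
  split
  · next h =>
    rw [Fintype.sum_eq_single ⟨b, h⟩ (fun x hx => by
      rw [if_neg]; rw [hP]; intro hv; exact hx (Subtype.ext hv))]
    rw [if_pos ((hP _).mpr rfl)]
  · next h =>
    apply Finset.sum_eq_zero
    intro x _
    rw [if_neg]
    rw [hP]
    intro hv
    exact h (hv ▸ x.2)

lemma combined_indep (n : ℕ) (hn : 0 < n)
    {ιG : Type} [Fintype ιG] (G : ιG → Equiv.Perm (Fin n))
    (hG0 : ∀ g, ∀ i : Fin n, i.1 = 0 → ((G g) i).1 = n - 1)
    (hGli : LinearIndependent ℝ fun g => permMatrix n (G g))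
    (B1 B2 : Finset ℕ)
    (hB1 : ∀ b ∈ B1, b + 2 ≤ n) (hB2 : ∀ b ∈ B2, 1 ≤ b ∧ b + 2 ≤ n) :
    LinearIndependent ℝ (Sum.elim (fun g => permMatrix n (G g))
      (Sum.elim (fun x : {b // b ∈ B1} => permMatrix n (pi1 n x.1 (hB1 x.1 x.2)))
        (fun x : {b // b ∈ B2} =>
          permMatrix n (pi2 n x.1 (hB2 x.1 x.2).1 (hB2 x.1 x.2).2)))) := by
  rw [Fintype.linearIndependent_iff]
  intro c hc
  have key : ∀ p q : Fin n,
      (∑ g : ιG, c (Sum.inl g) * permMatrix n (G g) p q)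
      + ((∑ x : {b // b ∈ B1},
            c (Sum.inr (Sum.inl x)) * permMatrix n (pi1 n x.1 (hB1 x.1 x.2)) p q)
        + (∑ x : {b // b ∈ B2},
            c (Sum.inr (Sum.inr x))
              * permMatrix n (pi2 n x.1 (hB2 x.1 x.2).1 (hB2 x.1 x.2).2) p q)) = 0 := by
    intro p q
    have h0 := congrFun (congrFun hc p) q
    rw [Matrix.sum_apply] at h0
    simp only [Matrix.smul_apply, smul_eq_mul, Matrix.zero_apply] at h0
    rw [Fintype.sum_sum_type, Fintype.sum_sum_type] at h0
    simpa using h0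
  classical
  set c1 : ℕ → ℝ := fun b => if h : b ∈ B1 then c (Sum.inr (Sum.inl ⟨b, h⟩)) else 0 with hc1def
  set c2 : ℕ → ℝ := fun b => if h : b ∈ B2 then c (Sum.inr (Sum.inr ⟨b, h⟩)) else 0 with hc2def
  have EqR : ∀ b, b + 2 ≤ n → c1 b + c2 b = 0 := by
    intro b hb
    have h0 := key ⟨0, hn⟩ ⟨b, by omega⟩
    rw [Finset.sum_eq_zero (fun g _ => by
      rw [show permMatrix n (G g) ⟨0, hn⟩ ⟨b, by omega⟩ = 0 from by
        rw [permMatrix, if_neg]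
        intro hq
        have := hG0 g ⟨0, hn⟩ rfl
        have := congrArg Fin.val hq
        simp only at this
        omega]
      ring)] at h0
    simp only [permMatrix, mul_ite, mul_one, mul_zero] at h0
    rw [sum_ite_subtype B1 _ _ b (fun x => by
        rw [Fin.ext_iff]
        simp only
        rw [pi1_zero n x.1 (hB1 x.1 x.2) ⟨0, hn⟩ rfl]),
      sum_ite_subtype B2 _ _ b (fun x => by
        rw [Fin.ext_iff]
        simp only
        rw [pi2_zero n x.1 (hB2 x.1 x.2).1 (hB2 x.1 x.2).2 ⟨0, hn⟩ rfl])] at h0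
    rw [hc1def, hc2def]
    simpa using h0
  have EqC : ∀ p, 1 ≤ p → p + 1 ≤ n → c1 (p - 1) + c2 p = 0 := by
    intro p hp1 hpn
    have h0 := key ⟨p, by omega⟩ ⟨n - 1, by omega⟩
    rw [Finset.sum_eq_zero (fun g _ => by
      rw [show permMatrix n (G g) ⟨p, by omega⟩ ⟨n - 1, by omega⟩ = 0 from by
        rw [permMatrix, if_neg]
        intro hq
        have h1 : (G g) ⟨p, by omega⟩ = (G g) ⟨0, hn⟩ := by
          rw [hq]
          ext
          rw [hG0 g ⟨0, hn⟩ rfl]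
        have := congrArg Fin.val ((G g).injective h1)
        simp only at this
        omega]
      ring)] at h0
    simp only [permMatrix, mul_ite, mul_one, mul_zero] at h0
    rw [sum_ite_subtype B1 _ _ (p - 1) (fun x => by
        rw [Fin.ext_iff]
        simp only
        rw [pi1_last_iff n x.1 (hB1 x.1 x.2) ⟨p, by omega⟩]
        show p = (x : ℕ) + 1 ↔ (x : ℕ) = p - 1
        have := hB1 x.1 x.2
        omega),
      sum_ite_subtype B2 _ _ p (fun x => by
        rw [Fin.ext_iff]
        simp only
        rw [pi2_last_iff n x.1 (hB2 x.1 x.2).1 (hB2 x.1 x.2).2 ⟨p, by omega⟩]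
        show p = (x : ℕ) ↔ (x : ℕ) = p
        omega)] at h0
    rw [hc1def, hc2def]
    simpa using h0
  have main : ∀ d b, n ≤ b + d + 1 → c1 b = 0 ∧ c2 b = 0 := by
    intro d
    induction d with
    | zero =>
      intro b hb
      constructor
      · rw [hc1def]
        simp only
        rw [dif_neg]
        intro hmem
        have := hB1 b hmem
        omega
      · rw [hc2def]
        simp only
        rw [dif_neg]
        intro hmem
        have := (hB2 b hmem).2
        omega
    | succ d ih =>
      intro b hb
      by_cases hcase : n ≤ b + d + 1
      · exact ih b hcase
      · have hc1b : c1 b = 0 := by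
          by_cases hmem : b ∈ B1
          · have hbn := hB1 b hmem
            have h0 := EqC (b + 1) (by omega) (by omega)
            have h2 := (ih (b + 1) (by omega)).2
            simp only [Nat.add_sub_cancel] at h0
            rw [h2] at h0
            linarith
          · rw [hc1def]
            simp only
            rw [dif_neg hmem]
        refine ⟨hc1b, ?_⟩
        by_cases hmem : b ∈ B2
        · have hbn := (hB2 b hmem).2
          have h0 := EqR b hbn
          rw [hc1b] at h0
          linarith
        · rw [hc2def]
          simp only
          rw [dif_neg hmem]
  have hz1 : ∀ x : {b // b ∈ B1}, c (Sum.inr (Sum.inl x)) = 0 := by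
    intro x
    have h0 := (main n x.1 (by omega)).1
    rw [hc1def] at h0
    simp only at h0
    rw [dif_pos x.2] at h0
    rw [← h0]
  have hz2 : ∀ x : {b // b ∈ B2}, c (Sum.inr (Sum.inr x)) = 0 := by
    intro x
    have h0 := (main n x.1 (by omega)).2
    rw [hc2def] at h0
    simp only at h0
    rw [dif_pos x.2] at h0
    rw [← h0]
  have hG : ∀ g : ιG, c (Sum.inl g) = 0 := by
    rw [Fintype.sum_sum_type, Fintype.sum_sum_type] at hc
    rw [Finset.sum_eq_zero (fun (x : {b // b ∈ B1}) _ => by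
        rw [Sum.elim_inr, Sum.elim_inl, hz1 x, zero_smul]),
      Finset.sum_eq_zero (fun (x : {b // b ∈ B2}) _ => by
        rw [Sum.elim_inr, Sum.elim_inr, hz2 x, zero_smul])] at hc
    simp only [Sum.elim_inl, add_zero] at hc
    exact Fintype.linearIndependent_iff.mp hGli (fun g => c (Sum.inl g)) hc
  intro i
  rcases i with g | x | x
  · exact hG g
  · exact hz1 x
  · exact hz2 x

lemma key_family : ∀ m : ℕ, ∃ F : Fin (m ^ 2 + 1) → Equiv.Perm (Fin (m + 1)),
    (∀ a, Avoids123 (F a)) ∧ LinearIndependent ℝ fun a => permMatrix (m + 1) (F a) := by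
  intro m
  induction m with
  | zero =>
    have e : Fin (0 ^ 2 + 1) ≃ Fin 1 := finCongr (by norm_num)
    refine ⟨fun _ => 1, ?_, ?_⟩
    · intro a i j k hij hjk h1
      have := i.isLt; have := j.isLt; have := k.isLt
      rw [Fin.lt_def] at hij hjk
      omega
    · have li : LinearIndependent ℝ (fun _ : Fin (0 ^ 2 + 1) => permMatrix 1 1) := by
        apply LinearIndependent.comp (v := fun _ : Fin 1 => permMatrix 1 1) _ e e.injective
        apply linearIndependent_unique_iff.mpr
        intro h
        have := congrFun (congrFun h 0) 0
        simp [permMatrix] at this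
      exact li
  | succ m ih =>
    obtain ⟨F, hA, hL⟩ := ih
    set n := m + 2 with hndef
    have hB1 : ∀ b ∈ Finset.range (m + 1), b + 2 ≤ n := by
      intro b hb
      rw [Finset.mem_range] at hb
      omega
    have hB2 : ∀ b ∈ Finset.Icc 1 m, 1 ≤ b ∧ b + 2 ≤ n := by
      intro b hb
      rw [Finset.mem_Icc] at hb
      omega
    set G : Fin (m ^ 2 + 1) → Equiv.Perm (Fin n) := fun a => liftP (m + 1) (F a) with hGdef
    have hG0 : ∀ g, ∀ i : Fin n, i.1 = 0 → ((G g) i).1 = n - 1 := by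
      intro g i hi
      rw [hGdef]
      simp only
      rw [liftP_zero_val (m + 1) (F g) i hi]
      omega
    have hGli : LinearIndependent ℝ fun g => permMatrix n (G g) := lift_li F hL
    have hLI := combined_indep n (by omega) G hG0 hGli (Finset.range (m + 1))
      (Finset.Icc 1 m) hB1 hB2
    have hcard : Fintype.card
        (Fin (m ^ 2 + 1) ⊕ ({b // b ∈ Finset.range (m + 1)} ⊕ {b // b ∈ Finset.Icc 1 m}))
        = (m + 1) ^ 2 + 1 := by
      simp [Fintype.card_sum, Fintype.card_coe, Finset.card_range, Nat.card_Icc]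
      ring
    set e := (Fintype.equivFinOfCardEq hcard).symm
    set bigFam : (Fin (m ^ 2 + 1) ⊕ ({b // b ∈ Finset.range (m + 1)} ⊕ {b // b ∈ Finset.Icc 1 m}))
        → Equiv.Perm (Fin n) :=
      Sum.elim G (Sum.elim (fun x => pi1 n x.1 (hB1 x.1 x.2))
        (fun x => pi2 n x.1 (hB2 x.1 x.2).1 (hB2 x.1 x.2).2)) with hbigdef
    refine ⟨fun a => bigFam (e a), ?_, ?_⟩
    · intro a
      rcases he : e a with g | x | x <;> simp only [he, hbigdef, Sum.elim_inl, Sum.elim_inr]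
      · exact liftP_avoids (m + 1) (F g) (hA g)
      · exact pi1_avoids n x.1 (hB1 x.1 x.2)
      · exact pi2_avoids n x.1 (hB2 x.1 x.2).1 (hB2 x.1 x.2).2
    · have heq : (fun a => permMatrix n (bigFam (e a)))
          = (Sum.elim (fun g => permMatrix n (G g))
            (Sum.elim (fun x : {b // b ∈ Finset.range (m + 1)} =>
                permMatrix n (pi1 n x.1 (hB1 x.1 x.2)))
              (fun x : {b // b ∈ Finset.Icc 1 m} =>
                permMatrix n (pi2 n x.1 (hB2 x.1 x.2).1 (hB2 x.1 x.2).2)))) ∘ e := by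
        funext a
        rw [Function.comp_apply]
        rcases e a with g | x | x <;> rfl
      rw [heq]
      exact hLI.comp e e.injective

/-- the `L`-shaped blocker
`L_n(s,r) = {(1, j) : n - s + 1 ≤ j ≤ n} ∪ {(i, n) : 1 ≤ i ≤ r}`
(with `r + s = n + 1`, `1`-based coordinates) admits `(n-1)²` linearly
independent permutation matrices of `123`-avoiding permutations, each meeting
it exactly once. -/
theorem lBlocker_dim (n r s : ℕ) (hr : 1 ≤ r) (hs : 1 ≤ s)
    (hrs : r + s = n + 1) :
    ∃ σ : Fin ((n - 1) ^ 2) → Equiv.Perm (Fin n),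
      (∀ a, Avoids123 (σ a)) ∧
      (∀ a, ∃! i : Fin n, (i, σ a i) ∈
        ({p : Fin n × Fin n | ((p.1 : ℕ) = 0 ∧ n ≤ (p.2 : ℕ) + s) ∨
          ((p.2 : ℕ) + 1 = n ∧ (p.1 : ℕ) + 1 ≤ r)} : Set (Fin n × Fin n))) ∧
      LinearIndependent ℝ fun a => permMatrix n (σ a) := by
  rcases Nat.lt_or_ge n 2 with h2 | h2
  · interval_cases n
    · omega
    · refine ⟨fun _ => 1, ?_, ?_, ?_⟩
      · intro a
        exact absurd a.isLt (by norm_num)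
      · intro a
        exact absurd a.isLt (by norm_num)
      · haveI : IsEmpty (Fin ((1 - 1) ^ 2)) := ⟨fun a => absurd a.isLt (by norm_num)⟩
        exact linearIndependent_empty_type
  · obtain ⟨m, rfl⟩ : ∃ m, n = m + 2 := ⟨n - 2, by omega⟩
    classical
    obtain ⟨F, hA, hL⟩ := key_family m
    set n' := m + 2 with hn'def
    set B1 : Finset ℕ := if 2 ≤ r ∧ r ≤ m + 1 then Finset.range (m + 1) else Finset.Icc 1 m
      with hB1def
    set B2 : Finset ℕ := (Finset.Icc 1 m).erase (r - 1) with hB2def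
    have hB1 : ∀ b ∈ B1, b + 2 ≤ n' := by
      intro b hb
      rw [hB1def] at hb
      split_ifs at hb
      · rw [Finset.mem_range] at hb
        omega
      · rw [Finset.mem_Icc] at hb
        omega
    have hB2 : ∀ b ∈ B2, 1 ≤ b ∧ b + 2 ≤ n' := by
      intro b hb
      rw [hB2def, Finset.mem_erase, Finset.mem_Icc] at hb
      omega
    have hB2' : ∀ b ∈ B2, b ≠ r - 1 := by
      intro b hb
      rw [hB2def, Finset.mem_erase] at hb
      exact hb.1
    set G : Fin (m ^ 2 + 1) → Equiv.Perm (Fin n') := fun a => liftP (m + 1) (F a) with hGdef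
    have hG0 : ∀ g, ∀ i : Fin n', i.1 = 0 → ((G g) i).1 = n' - 1 := by
      intro g i hi
      rw [hGdef]
      simp only
      rw [liftP_zero_val (m + 1) (F g) i hi]
      omega
    have hGli : LinearIndependent ℝ fun g => permMatrix n' (G g) := lift_li F hL
    have hLI := combined_indep n' (by omega) G hG0 hGli B1 B2 hB1 hB2
    have hcard : Fintype.card
        (Fin (m ^ 2 + 1) ⊕ ({b // b ∈ B1} ⊕ {b // b ∈ B2})) = (m + 1) ^ 2 := by
      have hsq : (m + 1) ^ 2 = m ^ 2 + 2 * m + 1 := by ring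
      simp only [Fintype.card_sum, Fintype.card_coe, Fintype.card_fin]
      rw [hB1def, hB2def]
      split_ifs with hcond
      · have hmem : r - 1 ∈ Finset.Icc 1 m := by
          rw [Finset.mem_Icc]
          omega
        rw [Finset.card_erase_of_mem hmem, Finset.card_range, Nat.card_Icc]
        omega
      · have hmem : r - 1 ∉ Finset.Icc 1 m := by
          rw [Finset.mem_Icc]
          omega
        rw [Finset.erase_eq_of_notMem hmem, Nat.card_Icc]
        omega
    set e := (Fintype.equivFinOfCardEq hcard).symm with hedef
    set bigFam : (Fin (m ^ 2 + 1) ⊕ ({b // b ∈ B1} ⊕ {b // b ∈ B2})) → Equiv.Perm (Fin n') :=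
      Sum.elim G (Sum.elim (fun x => pi1 n' x.1 (hB1 x.1 x.2))
        (fun x => pi2 n' x.1 (hB2 x.1 x.2).1 (hB2 x.1 x.2).2)) with hbigdef
    refine ⟨fun a => bigFam (e a), ?_, ?_, ?_⟩
    · intro a
      rcases he : e a with g | x | x <;> simp only [he, hbigdef, Sum.elim_inl, Sum.elim_inr]
      · exact liftP_avoids (m + 1) (F g) (hA g)
      · exact pi1_avoids n' x.1 (hB1 x.1 x.2)
      · exact pi2_avoids n' x.1 (hB2 x.1 x.2).1 (hB2 x.1 x.2).2
    · intro a
      rcases he : e a with g | x | x <;> simp only [he, hbigdef, Sum.elim_inl, Sum.elim_inr]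
      · -- lift component
        refine ⟨⟨0, by omega⟩, Or.inl ⟨rfl, ?_⟩, ?_⟩
        · rw [hG0 g ⟨0, by omega⟩ rfl]
          omega
        · intro y hy
          simp only [Set.mem_setOf_eq] at hy
          rcases hy with ⟨hy1, _⟩ | ⟨hy1, _⟩
          · exact Fin.ext hy1
          · by_contra hne
            have hyne : y.1 ≠ 0 := fun h => hne (Fin.ext h)
            have hlt := liftP_val_lt (m + 1) (F g) y hyne
            have hb : ((G g) y).1 = ((liftP (m + 1) (F g)) y).1 := rfl
            omega
      · -- pi1 component
        by_cases hcb : x.1 + 1 ≤ r - 1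
        · refine ⟨⟨x.1 + 1, by have := hB1 x.1 x.2; omega⟩, Or.inr ⟨?_, ?_⟩, ?_⟩
          · rw [(pi1_last_iff n' x.1 (hB1 x.1 x.2)
              ⟨x.1 + 1, by have := hB1 x.1 x.2; omega⟩).mpr rfl]
            omega
          · show x.1 + 1 + 1 ≤ r
            omega
          · intro y hy
            simp only [Set.mem_setOf_eq] at hy
            rcases hy with ⟨hy1, hy2⟩ | ⟨hy1, _⟩
            · rw [pi1_zero n' x.1 (hB1 x.1 x.2) y hy1] at hy2
              exact absurd hy2 (by omega)
            · have hv := (pi1_last_iff n' x.1 (hB1 x.1 x.2) y).mp (by omega)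
              exact Fin.ext hv
        · refine ⟨⟨0, by omega⟩, Or.inl ⟨rfl, ?_⟩, ?_⟩
          · rw [pi1_zero n' x.1 (hB1 x.1 x.2) ⟨0, by omega⟩ rfl]
            omega
          · intro y hy
            simp only [Set.mem_setOf_eq] at hy
            rcases hy with ⟨hy1, _⟩ | ⟨hy1, hy2⟩
            · exact Fin.ext hy1
            · have hv := (pi1_last_iff n' x.1 (hB1 x.1 x.2) y).mp (by omega)
              exact absurd hy2 (by omega)
      · -- pi2 component
        have hb1 : 1 ≤ x.1 := (hB2 x.1 x.2).1
        have hbn : x.1 + 2 ≤ n' := (hB2 x.1 x.2).2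
        have hbne : x.1 ≠ r - 1 := hB2' x.1 x.2
        by_cases hcb : x.1 ≤ r - 1
        · refine ⟨⟨x.1, by omega⟩, Or.inr ⟨?_, ?_⟩, ?_⟩
          · rw [(pi2_last_iff n' x.1 (hB2 x.1 x.2).1 (hB2 x.1 x.2).2
              ⟨x.1, by omega⟩).mpr rfl]
            omega
          · show x.1 + 1 ≤ r
            omega
          · intro y hy
            simp only [Set.mem_setOf_eq] at hy
            rcases hy with ⟨hy1, hy2⟩ | ⟨hy1, _⟩
            · rw [pi2_zero n' x.1 (hB2 x.1 x.2).1 (hB2 x.1 x.2).2 y hy1] at hy2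
              exact absurd hy2 (by omega)
            · have hv := (pi2_last_iff n' x.1 (hB2 x.1 x.2).1 (hB2 x.1 x.2).2 y).mp (by omega)
              exact Fin.ext hv
        · refine ⟨⟨0, by omega⟩, Or.inl ⟨rfl, ?_⟩, ?_⟩
          · rw [pi2_zero n' x.1 (hB2 x.1 x.2).1 (hB2 x.1 x.2).2 ⟨0, by omega⟩ rfl]
            omega
          · intro y hy
            simp only [Set.mem_setOf_eq] at hy
            rcases hy with ⟨hy1, _⟩ | ⟨hy1, hy2⟩
            · exact Fin.ext hy1
            · have hv := (pi2_last_iff n' x.1 (hB2 x.1 x.2).1 (hB2 x.1 x.2).2 y).mp (by omega)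
              exact absurd hy2 (by omega)
    · have heq : (fun a => permMatrix n' (bigFam (e a)))
          = (Sum.elim (fun g => permMatrix n' (G g))
            (Sum.elim (fun x : {b // b ∈ B1} => permMatrix n' (pi1 n' x.1 (hB1 x.1 x.2)))
              (fun x : {b // b ∈ B2} =>
                permMatrix n' (pi2 n' x.1 (hB2 x.1 x.2).1 (hB2 x.1 x.2).2)))) ∘ e := by
        funext a
        rw [Function.comp_apply]
        rcases e a with g | x | x <;> rfl
      have final : LinearIndependent ℝ
          (fun a : Fin ((m + 1) ^ 2) => permMatrix n' (bigFam (e a))) := by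
        rw [heq]
        exact hLI.comp e e.injective
      exact final
end

section
/- Let n ≥ 1 and let B be a set of positions in {1,…,n} × {1,…,n} that is a blocker of all n×n 123-avoiding permutation matrices. Then |B| ≥ n. -/
lemma subval {n : ℕ} [NeZero n] (c x : Fin n) :
    ((c - x : Fin n) : ℕ) = if (x:ℕ) ≤ c then (c:ℕ) - x else n + (c:ℕ) - x := by
  rw [Fin.sub_def]
  have hx := x.isLt; have hc := c.isLt
  simp only []
  split
  · rw [Nat.mod_eq_sub_mod (by omega), Nat.mod_eq_of_lt (by omega)]; omega
  · rw [Nat.mod_eq_of_lt (by omega)]; omega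

lemma key {n : ℕ} [NeZero n] (c x y : Fin n) (hxy : x < y)
    (h : (c - x : Fin n) < (c - y : Fin n)) : (x:ℕ) ≤ c ∧ (c:ℕ) < y := by
  have h1 := subval c x; have h2 := subval c y
  have hx := x.isLt; have hy := y.isLt; have hc := c.isLt
  rw [Fin.lt_def] at h hxy
  rw [h1] at h; rw [h2] at h
  split_ifs at h <;> omega

lemma avoids {n : ℕ} [NeZero n] (c : Fin n) : Avoids123 (Equiv.subLeft c) := by
  intro i j k hij hjk h1 h2
  simp only [Equiv.subLeft_apply] at h1 h2
  have a := key c i j hij h1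
  have b := key c j k hjk h2
  omega

/-- every blocker of all `n × n` `123`-avoiding permutation
matrices has at least `n` positions. -/
theorem blocker_card_ge (n : ℕ) (hn : 1 ≤ n) (B : Set (Fin n × Fin n))
    (hB : IsBlocker B) :
    n ≤ B.ncard := by
  haveI : NeZero n := ⟨by omega⟩
  choose f hf using fun c : Fin n => hB (Equiv.subLeft c) (avoids c)
  set F : Fin n → Fin n × Fin n := fun c => (f c, c - f c) with hF
  have hinj : Function.Injective F := by
    intro a b hab
    simp only [hF, Prod.mk.injEq] at hab
    obtain ⟨h1, h2⟩ := hab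
    rw [h1] at h2
    exact sub_left_injective h2
  have hsub : Set.range F ⊆ B := by
    rintro _ ⟨c, rfl⟩
    simpa [hF, Equiv.subLeft_apply] using hf c
  have := Set.ncard_le_ncard hsub (Set.toFinite B)
  rwa [Set.ncard_eq_toFinset_card', Set.toFinset_range,
    Finset.card_image_of_injective _ hinj, Finset.card_univ, Fintype.card_fin] at this
end
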